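/- arXiv:1206.4355 — 9 statements merged into one kernel-verified Lean document; each statement's English description precedes it below -/
import Mathlib

section
/- Let p be a prime. A positive integer n is p-practical if and only if every integer m with 1 ≤ m ≤ n can be written as m = Σ_{d ∣ n} ℓ_p*(d)·n_d, where for each positive divisor d of n, n_d is an integer with 0 ≤ n_d ≤ φ(d)/ℓ_p*(d). -/
open scoped Classical

/-- `n` is φ-practical: `X^n - 1` has a divisor in `ℤ[X]` of every degree `1 ≤ m ≤ n`. -/
def PhiPractical (n : ℕ) : Prop :=
  ∀ m : ℕ, 1 ≤ m → m ≤ n →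
    ∃ g : Polynomial ℤ, g ∣ (Polynomial.X ^ n - 1) ∧ g.natDegree = m

/-- `n` is p-practical: `X^n - 1` has a divisor in `𝔽_p[X]` of every degree `1 ≤ m ≤ n`. -/
def PPractical (p n : ℕ) : Prop :=
  ∀ m : ℕ, 1 ≤ m → m ≤ n →
    ∃ g : Polynomial (ZMod p), g ∣ (Polynomial.X ^ n - 1) ∧ g.natDegree = m

/-- `n` is λ-practical: `n` is p-practical for every prime `p`. -/
def LambdaPractical (n : ℕ) : Prop := ∀ p : ℕ, p.Prime → PPractical p n

/-- `ℓ_p*(d)`: the multiplicative order of `p` modulo the largest divisor of `d`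
coprime to `p` (for `p` prime, this largest divisor is `ordCompl[p] d`). -/
noncomputable def lstar (p d : ℕ) : ℕ := orderOf ((p : ZMod (ordCompl[p] d)))

/-- The Carmichael function `λ(d)`: the exponent of `(ℤ/dℤ)ˣ`. -/
noncomputable def carmichael (d : ℕ) : ℕ := Monoid.exponent (ZMod d)ˣ

/-- `n` is weakly φ-practical: writing `n = p₁^{e₁} ⋯ p_k^{e_k}` with `p₁ < ⋯ < p_k`,
each `p_{i+1} ≤ p₁^{e₁} ⋯ p_i^{e_i} + 2`; equivalently, every prime `q ∣ n` satisfies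
`q ≤ (∏_{r ∣ n, r prime, r < q} r^{v_r(n)}) + 2`. -/
def WeaklyPhiPractical (n : ℕ) : Prop :=
  0 < n ∧ ∀ q : ℕ, q.Prime → q ∣ n →
    q ≤ (∏ r ∈ n.primeFactors.filter (· < q), r ^ n.factorization r) + 2

open Polynomial UniqueFactorizationMonoid

section Aux

variable {α ι : Type*}

lemma aux_split2 [DecidableEq α] (t a b : Multiset α) (h : t ≤ a + b) :
    ∃ ta tb, ta ≤ a ∧ tb ≤ b ∧ t = ta + tb := by
  refine ⟨t ∩ a, t - a, Multiset.inter_le_right, ?_, ?_⟩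
  · rw [Multiset.le_iff_count]
    intro x
    have h1 := Multiset.le_iff_count.mp h x
    rw [Multiset.count_add] at h1
    rw [Multiset.count_sub]
    omega
  · refine Multiset.ext.mpr fun x => ?_
    have h1 := Multiset.le_iff_count.mp h x
    rw [Multiset.count_add] at h1
    rw [Multiset.count_add, Multiset.count_inter, Multiset.count_sub]
    omega

lemma aux_split_sum [DecidableEq α] [DecidableEq ι] (s : Finset ι) (M : ι → Multiset α)
    (t : Multiset α) (h : t ≤ ∑ i ∈ s, M i) :
    ∃ T : ι → Multiset α, (∀ i ∈ s, T i ≤ M i) ∧ t = ∑ i ∈ s, T i := by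
  induction s using Finset.induction generalizing t with
  | empty =>
    refine ⟨fun _ => 0, by simp, ?_⟩
    simpa using Multiset.le_zero.mp (by simpa using h)
  | @insert a s ha ih =>
    rw [Finset.sum_insert ha] at h
    obtain ⟨ta, tb, hta, htb, rfl⟩ := aux_split2 t (M a) (∑ i ∈ s, M i) h
    obtain ⟨T, hT, hTsum⟩ := ih tb htb
    refine ⟨Function.update T a ta, ?_, ?_⟩
    · intro i hi
      rcases Finset.mem_insert.mp hi with rfl | hi'
      · simpa using hta
      · rw [Function.update_of_ne (by rintro rfl; exact ha hi')]
        exact hT i hi'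
    · rw [Finset.sum_insert ha, Function.update_self]
      congr 1
      rw [hTsum]
      exact Finset.sum_congr rfl fun i hi =>
        (Function.update_of_ne (by rintro rfl; exact ha hi) _ _).symm

lemma aux_exists_card (s : Multiset α) : ∀ k, k ≤ Multiset.card s →
    ∃ t, t ≤ s ∧ Multiset.card t = k := by
  induction s using Multiset.induction with
  | empty =>
    intro k hk
    simp only [Multiset.card_zero, Nat.le_zero] at hk
    exact ⟨0, le_rfl, by simp [hk]⟩
  | cons a s ih =>
    intro k hk
    cases k with
    | zero => exact ⟨0, Multiset.zero_le _, rfl⟩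
    | succ k =>
      have hk' : k ≤ Multiset.card s := by simpa using hk
      obtain ⟨t, hts, htc⟩ := ih k hk'
      exact ⟨a ::ₘ t, Multiset.cons_le_cons a hts, by simp [htc]⟩

lemma aux_map_sum_sum (s : Finset ι) (T : ι → Multiset α) (f : α → ℕ) :
    ((∑ i ∈ s, T i).map f).sum = ∑ i ∈ s, ((T i).map f).sum := by
  induction s using Finset.induction with
  | empty => simp
  | @insert a s ha ih => simp [Finset.sum_insert ha, ih]

lemma aux_monic_of_mem_nf {p : ℕ} [Fact p.Prime] {g q : (ZMod p)[X]}
    (hq : q ∈ normalizedFactors g) : q.Monic := by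
  have h1 := normalize_normalized_factor q hq
  have h2 : q ≠ 0 := (prime_of_normalized_factor q hq).ne_zero
  rw [← h1]
  exact Polynomial.monic_normalize h2

lemma aux_degsum {p : ℕ} [Fact p.Prime] {g : (ZMod p)[X]} (hg : g ≠ 0) :
    g.natDegree = ((normalizedFactors g).map natDegree).sum := by
  have h := prod_normalizedFactors hg
  have hdeg : (normalizedFactors g).prod.natDegree = g.natDegree :=
    natDegree_eq_of_degree_eq (degree_eq_degree_of_associated h)
  rw [← hdeg, Polynomial.natDegree_multiset_prod_of_monic]
  exact fun f hf => aux_monic_of_mem_nf hf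

lemma aux_nf_finset_prod {p : ℕ} [Fact p.Prime] (s : Finset ι) (f : ι → (ZMod p)[X])
    (h : ∀ i ∈ s, f i ≠ 0) :
    normalizedFactors (∏ i ∈ s, f i) = ∑ i ∈ s, normalizedFactors (f i) := by
  induction s using Finset.induction with
  | empty => simp [normalizedFactors_one]
  | @insert a s ha ih =>
    rw [Finset.prod_insert ha, Finset.sum_insert ha,
      normalizedFactors_mul (h a (Finset.mem_insert_self a s))
        (Finset.prod_ne_zero_iff.mpr fun i hi => h i (Finset.mem_insert_of_mem hi)),
      ih fun i hi => h i (Finset.mem_insert_of_mem hi)]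

end Aux

lemma key_coprime (p : ℕ) (hp : p.Prime) (d : ℕ) (hd : 0 < d) (hpd : ¬ p ∣ d)
    (q : Polynomial (ZMod p)) (hq : Irreducible q)
    (hdvd : q ∣ Polynomial.cyclotomic d (ZMod p)) :
    q.natDegree = orderOf (p : ZMod d) := by
  haveI : Fact p.Prime := ⟨hp⟩
  haveI : Fact (Irreducible q) := ⟨hq⟩
  haveI : NeZero d := ⟨hd.ne'⟩
  set K := AdjoinRoot q with hK
  have hq0 : q ≠ 0 := hq.ne_zero
  let pb := AdjoinRoot.powerBasis hq0
  haveI : Fintype K := Module.fintypeOfFintype pb.basis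
  set k := q.natDegree with hk
  have hk0 : 0 < k := hq.natDegree_pos
  have hkdim : Module.finrank (ZMod p) K = k := by
    show Module.finrank (ZMod p) (AdjoinRoot q) = k
    rw [pb.finrank]
    rfl
  have hcard : Fintype.card K = p ^ k := by
    rw [Module.card_eq_pow_finrank (K := ZMod p) (V := K), ZMod.card, hkdim]
  set x : K := AdjoinRoot.root q with hx
  have hax : ∀ g : Polynomial (ZMod p), q ∣ g → Polynomial.aeval x g = 0 := by
    rintro g ⟨c, rfl⟩
    rw [map_mul, AdjoinRoot.aeval_eq, AdjoinRoot.mk_self, zero_mul]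
  haveI : NeZero (d : K) := by
    constructor
    have h1 : (d : ZMod p) ≠ 0 := by
      rwa [Ne, ZMod.natCast_eq_zero_iff]
    intro h
    apply h1
    apply (algebraMap (ZMod p) K).injective
    rwa [map_natCast, map_zero]
  have hxroot : (Polynomial.cyclotomic d K).IsRoot x := by
    have hmap : Polynomial.cyclotomic d K = Polynomial.map (algebraMap (ZMod p) K)
        (Polynomial.cyclotomic d (ZMod p)) := (Polynomial.map_cyclotomic _ _).symm
    rw [IsRoot.def, hmap, Polynomial.eval_map, ← Polynomial.aeval_def]
    exact hax _ hdvd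
  have hprim : IsPrimitiveRoot x d := (Polynomial.isRoot_cyclotomic_iff).mp hxroot
  have hord : d = orderOf x := hprim.eq_orderOf
  set ℓ := orderOf (p : ZMod d) with hℓ
  have hcop : Nat.Coprime p d := (hp.coprime_iff_not_dvd).mpr hpd
  have hu : IsUnit (p : ZMod d) := (ZMod.isUnit_iff_coprime p d).mpr hcop
  obtain ⟨u, hu'⟩ := hu
  have hℓ0 : 0 < ℓ := by
    rw [hℓ, ← hu', orderOf_units]
    exact orderOf_pos u
  -- Part 1 : ℓ ∣ k
  have hxu : IsUnit x := hprim.isUnit hd.ne'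
  obtain ⟨v, hv⟩ := hxu
  have hdk : d ∣ p ^ k - 1 := by
    have h1 : orderOf v ∣ Fintype.card Kˣ := orderOf_dvd_card
    rw [← orderOf_units, hv, ← hord] at h1
    rwa [Fintype.card_units, hcard] at h1
  have hle : ℓ ∣ k := by
    apply orderOf_dvd_of_pow_eq_one
    have : ((p ^ k : ℕ) : ZMod d) = ((1 : ℕ) : ZMod d) := by
      rw [ZMod.natCast_eq_natCast_iff]
      exact ((Nat.modEq_iff_dvd' (Nat.one_le_pow _ _ hp.pos)).mpr hdk).symm
    push_cast at this
    exact this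
  -- Part 2 : k ≤ ℓ
  have hdl : d ∣ p ^ ℓ - 1 := by
    have h1 : (p : ZMod d) ^ ℓ = 1 := pow_orderOf_eq_one _
    have h2 : ((p ^ ℓ : ℕ) : ZMod d) = ((1 : ℕ) : ZMod d) := by push_cast; exact h1
    rw [ZMod.natCast_eq_natCast_iff] at h2
    exact (Nat.modEq_iff_dvd' (Nat.one_le_pow _ _ hp.pos)).mp h2.symm
  have hxpow : x ^ p ^ ℓ = x := by
    have h1 : x ^ (p ^ ℓ - 1) = 1 := by
      apply orderOf_dvd_iff_pow_eq_one.mp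
      rw [← hord]; exact hdl
    calc x ^ p ^ ℓ = x ^ (p ^ ℓ - 1) * x := by
          rw [← pow_succ, Nat.sub_add_cancel (Nat.one_le_pow _ _ hp.pos)]
      _ = x := by rw [h1, one_mul]
  haveI : CharP K p := charP_of_injective_algebraMap (algebraMap (ZMod p) K).injective p
  have hall : ∀ y : K, y ^ p ^ ℓ = y := by
    have hF : (iterateFrobenius K p ℓ).comp (algebraMap (ZMod p) K) = algebraMap (ZMod p) K :=
      Subsingleton.elim _ _
    let F : K →ₐ[ZMod p] K :=
      { iterateFrobenius K p ℓ with commutes' := fun r => RingHom.congr_fun hF r }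
    have hFx : F x = x := by
      show iterateFrobenius K p ℓ x = x
      rw [iterateFrobenius_def, hxpow]
    intro y
    obtain ⟨h, rfl⟩ := AdjoinRoot.mk_surjective y
    rw [← AdjoinRoot.aeval_eq]
    calc (Polynomial.aeval x h) ^ p ^ ℓ = F (Polynomial.aeval x h) := by
          show _ = iterateFrobenius K p ℓ _
          rw [iterateFrobenius_def]
      _ = Polynomial.aeval (F x) h := (Polynomial.aeval_algHom_apply F x h).symm
      _ = Polynomial.aeval x h := by rw [hFx]
  have hkl : k ≤ ℓ := by
    set P : K[X] := X ^ p ^ ℓ - X with hP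
    have hP0 : P ≠ 0 := FiniteField.X_pow_card_pow_sub_X_ne_zero K hℓ0.ne' hp.one_lt
    have hsub : Finset.univ.val ≤ P.roots := by
      rw [Multiset.le_iff_subset Finset.univ.nodup]
      intro y _
      rw [Polynomial.mem_roots hP0]
      simp only [hP, IsRoot.def, Polynomial.eval_sub, Polynomial.eval_pow, Polynomial.eval_X]
      rw [hall y, sub_self]
    have h1 : Fintype.card K ≤ Multiset.card P.roots := by
      simpa using Multiset.card_le_card hsub
    have h2 : Multiset.card P.roots ≤ P.natDegree := P.card_roots'
    have h3 : P.natDegree = p ^ ℓ :=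
      FiniteField.X_pow_card_pow_sub_X_natDegree_eq K hℓ0.ne' hp.one_lt
    rw [hcard] at h1
    have : p ^ k ≤ p ^ ℓ := le_trans h1 (h3 ▸ h2)
    exact (Nat.pow_le_pow_iff_right hp.one_lt).mp this
  exact Nat.le_antisymm hkl (Nat.le_of_dvd hk0 hle)

lemma key_all (p : ℕ) [Fact p.Prime] (d : ℕ) (hd : 0 < d) {q : Polynomial (ZMod p)}
    (hq : q ∈ normalizedFactors (Polynomial.cyclotomic d (ZMod p))) :
    q.natDegree = lstar p d := by
  have hp : p.Prime := Fact.out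
  have hd0 : d ≠ 0 := hd.ne'
  have hpd' : ¬ p ∣ ordCompl[p] d := Nat.not_dvd_ordCompl hp hd0
  have hd'pos : 0 < ordCompl[p] d := Nat.ordCompl_pos p hd0
  have hmem' : q ∈ normalizedFactors (Polynomial.cyclotomic (ordCompl[p] d) (ZMod p)) := by
    rcases Nat.eq_zero_or_pos (d.factorization p) with h0 | h0
    · have he : ordCompl[p] d = d := by rw [h0, pow_zero, Nat.div_one]
      rwa [he]
    · have heq : Polynomial.cyclotomic d (ZMod p)
          = Polynomial.cyclotomic (ordCompl[p] d) (ZMod p)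
            ^ (p ^ (d.factorization p) - p ^ (d.factorization p - 1)) := by
        conv_lhs => rw [← Nat.ordProj_mul_ordCompl_eq_self d p]
        exact Polynomial.cyclotomic_mul_prime_pow_eq (ZMod p) hpd' h0
      rw [heq, normalizedFactors_pow] at hq
      exact (Multiset.mem_nsmul.mp hq).2
  show q.natDegree = orderOf ((p : ZMod (ordCompl[p] d)))
  exact key_coprime p hp _ hd'pos hpd' q (irreducible_of_normalized_factor q hmem')
    (dvd_of_mem_normalizedFactors hmem')

lemma key_card (p : ℕ) [Fact p.Prime] (d : ℕ) (hd : 0 < d) :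
    lstar p d * Multiset.card (normalizedFactors (Polynomial.cyclotomic d (ZMod p))) =
      d.totient := by
  have h2 : (normalizedFactors (Polynomial.cyclotomic d (ZMod p))).map Polynomial.natDegree
      = Multiset.replicate
        (Multiset.card (normalizedFactors (Polynomial.cyclotomic d (ZMod p)))) (lstar p d) := by
    rw [Multiset.eq_replicate]
    refine ⟨by simp, fun b hb => ?_⟩
    obtain ⟨q, hq, rfl⟩ := Multiset.mem_map.mp hb
    exact key_all p d hd hq
  calc lstar p d * Multiset.card (normalizedFactors (Polynomial.cyclotomic d (ZMod p)))
      = (Multiset.replicate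
          (Multiset.card (normalizedFactors (Polynomial.cyclotomic d (ZMod p))))
          (lstar p d)).sum := by
        rw [Multiset.sum_replicate, smul_eq_mul, mul_comm]
    _ = ((normalizedFactors (Polynomial.cyclotomic d (ZMod p))).map Polynomial.natDegree).sum :=
        by rw [h2]
    _ = (Polynomial.cyclotomic d (ZMod p)).natDegree :=
        (aux_degsum (Polynomial.cyclotomic_ne_zero d (ZMod p))).symm
    _ = d.totient := Polynomial.natDegree_cyclotomic d (ZMod p)

lemma key_lstar_pos (p : ℕ) [Fact p.Prime] (d : ℕ) (hd : 0 < d) : 0 < lstar p d := by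
  have h := key_card p d hd
  have ht : 0 < d.totient := Nat.totient_pos.mpr hd
  apply Nat.pos_of_ne_zero
  intro h0
  rw [h0, zero_mul] at h
  omega

lemma key_card_eq (p : ℕ) [Fact p.Prime] (d : ℕ) (hd : 0 < d) :
    Multiset.card (normalizedFactors (Polynomial.cyclotomic d (ZMod p))) =
      d.totient / lstar p d := by
  have h := key_card p d hd
  have hl := key_lstar_pos p d hd
  rw [← h, Nat.mul_div_cancel_left _ hl]

theorem stmt3 (p : ℕ) (hp : p.Prime) (n : ℕ) (hn : 0 < n) :
    PPractical p n ↔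
      ∀ m : ℕ, 1 ≤ m → m ≤ n →
        ∃ f : ℕ → ℕ, (∀ d ∈ n.divisors, f d ≤ Nat.totient d / lstar p d) ∧
          m = ∑ d ∈ n.divisors, lstar p d * f d := by
  haveI : Fact p.Prime := ⟨hp⟩
  classical
  have hWm : (Polynomial.X ^ n - 1 : Polynomial (ZMod p)).Monic := by
    have := Polynomial.monic_X_pow_sub_C (1 : ZMod p) hn.ne'
    simpa using this
  have hW0 : (Polynomial.X ^ n - 1 : Polynomial (ZMod p)) ≠ 0 := hWm.ne_zero
  have hprod : ∏ d ∈ n.divisors, Polynomial.cyclotomic d (ZMod p)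
      = (Polynomial.X ^ n - 1 : Polynomial (ZMod p)) :=
    Polynomial.prod_cyclotomic_eq_X_pow_sub_one hn _
  have hNF : normalizedFactors (Polynomial.X ^ n - 1 : Polynomial (ZMod p))
      = ∑ d ∈ n.divisors, normalizedFactors (Polynomial.cyclotomic d (ZMod p)) := by
    rw [← hprod, aux_nf_finset_prod]
    exact fun i _ => Polynomial.cyclotomic_ne_zero i _
  constructor
  · intro hpr m hm1 hmn
    obtain ⟨g, hgdvd, hgdeg⟩ := hpr m hm1 hmn
    have hg0 : g ≠ 0 := by
      rintro rfl
      exact hW0 (zero_dvd_iff.mp hgdvd)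
    have hle : normalizedFactors g
        ≤ normalizedFactors (Polynomial.X ^ n - 1 : Polynomial (ZMod p)) :=
      (dvd_iff_normalizedFactors_le_normalizedFactors hg0 hW0).mp hgdvd
    rw [hNF] at hle
    obtain ⟨T, hT, hTsum⟩ := aux_split_sum _ _ _ hle
    have hTdeg : ∀ d ∈ n.divisors, ((T d).map Polynomial.natDegree).sum
        = lstar p d * Multiset.card (T d) := by
      intro d hd
      have hdpos : 0 < d := Nat.pos_of_mem_divisors hd
      have h2 : (T d).map Polynomial.natDegree
          = Multiset.replicate (Multiset.card (T d)) (lstar p d) := by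
        rw [Multiset.eq_replicate]
        refine ⟨by simp, fun b hb => ?_⟩
        obtain ⟨q, hq, rfl⟩ := Multiset.mem_map.mp hb
        exact key_all p d hdpos (Multiset.mem_of_le (hT d hd) hq)
      rw [h2, Multiset.sum_replicate, smul_eq_mul, mul_comm]
    refine ⟨fun d => Multiset.card (T d), ?_, ?_⟩
    · intro d hd
      have hdpos : 0 < d := Nat.pos_of_mem_divisors hd
      rw [← key_card_eq p d hdpos]
      exact Multiset.card_le_card (hT d hd)
    · calc m = g.natDegree := hgdeg.symm
        _ = ((normalizedFactors g).map Polynomial.natDegree).sum := aux_degsum hg0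
        _ = ((∑ d ∈ n.divisors, T d).map Polynomial.natDegree).sum := by rw [← hTsum]
        _ = ∑ d ∈ n.divisors, ((T d).map Polynomial.natDegree).sum := aux_map_sum_sum _ _ _
        _ = ∑ d ∈ n.divisors, lstar p d * Multiset.card (T d) :=
          Finset.sum_congr rfl hTdeg
  · intro H m hm1 hmn
    obtain ⟨f, hfb, hfsum⟩ := H m hm1 hmn
    have hex : ∀ d ∈ n.divisors, ∃ t,
        t ≤ normalizedFactors (Polynomial.cyclotomic d (ZMod p))
          ∧ Multiset.card t = f d := by
      intro d hd
      have hdpos : 0 < d := Nat.pos_of_mem_divisors hd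
      apply aux_exists_card
      rw [key_card_eq p d hdpos]
      exact hfb d hd
    choose! t ht1 ht2 using hex
    refine ⟨∏ d ∈ n.divisors, (t d).prod, ?_, ?_⟩
    · rw [← hprod]
      refine Finset.prod_dvd_prod_of_dvd _ _ fun d hd => ?_
      exact dvd_trans (Multiset.prod_dvd_prod_of_le (ht1 d hd))
        (prod_normalizedFactors (Polynomial.cyclotomic_ne_zero d (ZMod p))).dvd
    · have hmono : ∀ d ∈ n.divisors, ((t d).prod).Monic := by
        intro d hd
        have := Polynomial.monic_multiset_prod_of_monic (t d) id fun q hq =>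
          aux_monic_of_mem_nf (Multiset.mem_of_le (ht1 d hd) hq)
        simpa using this
      rw [Polynomial.natDegree_prod_of_monic _ _ hmono]
      rw [hfsum]
      refine Finset.sum_congr rfl fun d hd => ?_
      have hdpos : 0 < d := Nat.pos_of_mem_divisors hd
      have hm : ∀ q ∈ t d, Polynomial.Monic q := fun q hq =>
        aux_monic_of_mem_nf (Multiset.mem_of_le (ht1 d hd) hq)
      rw [Polynomial.natDegree_multiset_prod_of_monic _ hm]
      have h2 : (t d).map Polynomial.natDegree
          = Multiset.replicate (Multiset.card (t d)) (lstar p d) := by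
        rw [Multiset.eq_replicate]
        refine ⟨by simp, fun b hb => ?_⟩
        obtain ⟨q, hq, rfl⟩ := Multiset.mem_map.mp hb
        exact key_all p d hdpos (Multiset.mem_of_le (ht1 d hd) hq)
      rw [h2, Multiset.sum_replicate, smul_eq_mul, ht2 d hd, mul_comm]
end

section
/- For every positive integer n there exist infinitely many primes p such that n is p-practical. In particular, every positive integer is p-practical for at least one prime p. -/
open scoped Classical

open Polynomial in
lemma ppractical_of_modEq_one {p n : ℕ} (hp : p.Prime) (hn : 0 < n)
    (h : p ≡ 1 [MOD n]) : PPractical p n := by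
  haveI : Fact p.Prime := ⟨hp⟩
  -- n divides p - 1
  have hdvd : n ∣ p - 1 := (Nat.modEq_iff_dvd' hp.one_lt.le).mp h.symm
  -- (ZMod p)ˣ is cyclic of order p - 1
  obtain ⟨g, hg⟩ := IsCyclic.exists_ofOrder_eq_natCard (α := (ZMod p)ˣ)
  have hcard : Nat.card (ZMod p)ˣ = p - 1 := by
    simp [Nat.card_eq_fintype_card, ZMod.card_units_eq_totient, Nat.totient_prime hp]
  rw [hcard] at hg
  have hg0 : orderOf g ≠ 0 := by rw [hg]; exact Nat.sub_ne_zero_of_lt hp.one_lt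
  have hdvd' : n ∣ orderOf g := hg ▸ hdvd
  set u := g ^ (orderOf g / n) with hu
  have hord : orderOf u = n := orderOf_pow_orderOf_div hg0 hdvd'
  have hordc : orderOf ((u : ZMod p)) = n := by rw [orderOf_units, hord]
  have hprim : IsPrimitiveRoot ((u : ZMod p)) n := hordc ▸ IsPrimitiveRoot.orderOf _
  have hfact : (X : (ZMod p)[X]) ^ n - 1 = ∏ ζ ∈ nthRootsFinset n (1 : ZMod p), (X - C ζ) :=
    X_pow_sub_one_eq_prod hn hprim
  have hcardroots : (nthRootsFinset n (1 : ZMod p)).card = n := hprim.card_nthRootsFinset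
  intro m hm1 hmn
  obtain ⟨s, hs, hscard⟩ := Finset.exists_subset_card_eq (hcardroots.symm ▸ hmn)
  refine ⟨∏ ζ ∈ s, (X - C ζ), ?_, ?_⟩
  · rw [hfact]; exact Finset.prod_dvd_prod_of_subset _ _ _ hs
  · rw [natDegree_prod _ _ (fun ζ _ => X_sub_C_ne_zero ζ)]
    simp [hscard]

theorem stmt5 (n : ℕ) (hn : 0 < n) :
    {p : ℕ | p.Prime ∧ PPractical p n}.Infinite ∧
    ∃ p : ℕ, p.Prime ∧ PPractical p n := by
  have key : ∀ k : ℕ, ∃ p ∈ {p : ℕ | p.Prime ∧ PPractical p n}, k < p := by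
    intro k
    obtain ⟨p, hp, hkp, hmod⟩ := Nat.exists_prime_gt_modEq_one (k := n) k hn.ne'
    exact ⟨p, ⟨hp, ppractical_of_modEq_one hp hn hmod⟩, hkp⟩
  have hinf : {p : ℕ | p.Prime ∧ PPractical p n}.Infinite := by
    refine Set.infinite_of_not_bddAbove ?_
    rintro ⟨b, hb⟩
    obtain ⟨p, hp, hbp⟩ := key b
    exact absurd (hb hp) (by omega)
  obtain ⟨p, hp, -⟩ := key 0
  exact ⟨hinf, p, hp.1, hp.2⟩
end

section
/- For every positive integer n there exists a prime p such that ℓ_p*(d) = λ(d) for every positive divisor d of n. -/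
open scoped Classical

lemma modeq_one_add (m t : ℕ) : 1 + m * t ≡ 1 [MOD m] :=
  ((Nat.modEq_iff_dvd' (Nat.le_add_right 1 _)).mpr (by simp)).symm

lemma carmichael_eq_orderOf {d : ℕ} {x : ZMod d} (hx : IsUnit x)
    (h : ∀ u : (ZMod d)ˣ, u ^ orderOf x = 1) : carmichael d = orderOf x := by
  refine Nat.dvd_antisymm (Monoid.exponent_dvd_of_forall_pow_eq_one h) ?_
  have h1 : orderOf x = orderOf hx.unit := by
    rw [← orderOf_units, hx.unit_spec]
  rw [h1]
  exact Monoid.order_dvd_exponent hx.unit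

lemma orderOf_zmod_one (x : ZMod 1) : orderOf x = 1 :=
  orderOf_eq_one_iff.mpr (Subsingleton.elim _ _)

lemma carmichael_one : carmichael 1 = 1 :=
  Nat.dvd_one.mp <| Monoid.exponent_dvd_of_forall_pow_eq_one fun u => by
    rw [pow_one]; exact Subsingleton.elim u 1

lemma carmichael_two : carmichael 2 = 1 :=
  Nat.dvd_one.mp <| Monoid.exponent_dvd_of_forall_pow_eq_one fun u => by
    rw [pow_one]; exact Subsingleton.elim u 1

lemma orderOf_three_zmod_four : orderOf ((3:ℕ) : ZMod 4) = 2 := by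
  apply orderOf_eq_prime <;> decide

lemma carmichael_four : carmichael 4 = 2 := by
  have hu : IsUnit ((3:ℕ) : ZMod 4) := (ZMod.isUnit_iff_coprime 3 4).mpr (by decide)
  have := carmichael_eq_orderOf hu (fun u => by
    rw [orderOf_three_zmod_four]
    apply Units.ext
    push_cast
    have key : ∀ x y : ZMod 4, x * y = 1 → x ^ 2 = 1 := by decide
    exact key _ _ u.mul_inv)
  rw [this, orderOf_three_zmod_four]


lemma sq_one_add (x t k : ℕ) (hxe : x = 1 + 2^(k+2) * t) :
    x ^ 2 = 1 + 2^(k+3) * (t + 2^(k+1) * t^2) := by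
  have e2 : (2:ℕ)^(k+3) = 2^(k+2)*2 := by rw [pow_succ]
  have e3 : (2:ℕ)^(k+1) * 2^(k+3) = 2^(k+2) * 2^(k+2) := by
    rw [← pow_add, ← pow_add]; congr 1; omega
  calc x ^ 2 = 1 + (2^(k+2)*2)*t + (2^(k+2)*2^(k+2))*t^2 := by rw [hxe]; ring
    _ = 1 + 2^(k+3) * (t + 2^(k+1) * t^2) := by rw [← e2, ← e3]; ring

/-- Every odd number satisfies `x^(2^k) ≡ 1 mod 2^(k+2)` for `k ≥ 1`. -/
lemma odd_pow_two_modeq (x : ℕ) (hx : Odd x) :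
    ∀ k, 1 ≤ k → x ^ (2^k) ≡ 1 [MOD 2^(k+2)] := by
  intro k hk
  induction k with
  | zero => omega
  | succ k ih =>
    rcases Nat.eq_or_lt_of_le hk with h1 | h1
    · -- base case : x^2 ≡ 1 [MOD 8]
      obtain ⟨m, rfl⟩ := hx
      obtain ⟨c, hc⟩ := Nat.even_mul_succ_self m
      have key : m*m + m = c + c := by nlinarith [hc]
      have h2 : (2*m+1)^(2^1) = 1 + 8 * c := by
        have : (2*m+1)^(2^1) = 4*(m*m+m) + 1 := by ring
        rw [this, key]; ring
      rw [← h1, h2]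
      simpa using modeq_one_add 8 c
    · have h2 := ih (by omega)
      have hx1 : 1 ≤ x ^ (2^k) := Nat.one_le_pow _ _ (by rcases hx with ⟨m, rfl⟩; omega)
      obtain ⟨t, ht⟩ := (Nat.modEq_iff_dvd' hx1).mp h2.symm
      have hxe : x ^ (2^k) = 1 + 2^(k+2) * t := by omega
      have e1 : x ^ (2^(k+1)) = (x ^ (2^k))^2 := by rw [← pow_mul, ← pow_succ]
      rw [e1, sq_one_add _ t k hxe, show k + 1 + 2 = k + 3 by rfl]
      exact modeq_one_add _ _

/-- `3^(2^k) = 1 + 2^(k+2) u` with `u` odd, for `k ≥ 1`. -/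
lemma three_pow_two : ∀ k, 1 ≤ k → ∃ u, Odd u ∧ 3 ^ (2^k) = 1 + 2^(k+2) * u := by
  intro k hk
  induction k with
  | zero => omega
  | succ k ih =>
    rcases Nat.eq_or_lt_of_le hk with h1 | h1
    · exact ⟨1, odd_one, by rw [← h1]; norm_num⟩
    · obtain ⟨u, hu, he⟩ := ih (by omega)
      refine ⟨u + 2^(k+1) * u^2, ?_, ?_⟩
      · exact hu.add_even (Even.mul_right ⟨2^k, by rw [pow_succ]; ring⟩ _)
      · have e1 : (3:ℕ) ^ (2^(k+1)) = (3 ^ (2^k))^2 := by rw [← pow_mul, ← pow_succ]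
        rw [e1, sq_one_add _ u k he, show k + 1 + 2 = k + 3 by rfl]

lemma natCast_one_add_ne_one {n c : ℕ} (hc : ¬ n ∣ c) : ((1 + c : ℕ) : ZMod n) ≠ 1 := by
  rw [Ne, ← Nat.cast_one (R := ZMod n), ZMod.natCast_eq_natCast_iff]
  intro hmod
  exact hc (by simpa using (Nat.modEq_iff_dvd' (Nat.le_add_right 1 _)).mp hmod.symm)

lemma orderOf_three_zmod (f : ℕ) (hf : 3 ≤ f) : orderOf ((3:ℕ) : ZMod (2^f)) = 2^(f-2) := by
  set z : ZMod (2^f) := ((3:ℕ) : ZMod (2^f)) with hz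
  obtain ⟨u, hu, he⟩ := three_pow_two (f-2) (by omega)
  have hf2 : f - 2 + 2 = f := by omega
  have hpow : z ^ (2^(f-2)) = 1 := by
    rw [hz, ← Nat.cast_pow, he, hf2, ← Nat.cast_one (R := ZMod (2^f)),
      ZMod.natCast_eq_natCast_iff]
    exact modeq_one_add _ _
  have hdvd : orderOf z ∣ 2^(f-2) := orderOf_dvd_of_pow_eq_one hpow
  obtain ⟨j, hj, hoj⟩ := (Nat.dvd_prime_pow Nat.prime_two).mp hdvd
  have hne : z ^ (2^(f-3)) ≠ 1 := by
    rcases eq_or_lt_of_le hf with h3 | h4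
    · rw [show f-3 = 0 by omega, pow_zero, pow_one, hz,
        show (3:ℕ) = 1 + 2 by norm_num]
      exact natCast_one_add_ne_one (by rw [← h3]; norm_num)
    · obtain ⟨v, hv, hev⟩ := three_pow_two (f-3) (by omega)
      rw [hz, ← Nat.cast_pow, hev, show f-3+2 = f-1 by omega]
      refine natCast_one_add_ne_one ?_
      intro h1
      have h2 : (2:ℕ)^f = 2^(f-1) * 2 := by rw [← pow_succ]; congr 1; omega
      rw [h2] at h1
      have h3 : 2 ∣ v := (mul_dvd_mul_iff_left (a := (2:ℕ)^(f-1)) (by positivity)).mp h1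
      exact (Nat.not_even_iff_odd.mpr hv) ((even_iff_two_dvd).mpr h3)
  have hjf : j = f - 2 := by
    by_contra hne2
    exact hne (orderOf_dvd_iff_pow_eq_one.mp (hoj ▸ pow_dvd_pow 2 (by omega : j ≤ f - 3)))
  rw [hoj, hjf]

lemma units_pow_two_aux (f : ℕ) (hf : 3 ≤ f) (u : (ZMod (2^f))ˣ) : u ^ (2^(f-2)) = 1 := by
  haveI : NeZero ((2:ℕ)^f) := ⟨by positivity⟩
  set x : ZMod (2^f) := (u : ZMod (2^f)) with hx
  have hval : ((x.val : ℕ) : ZMod (2^f)) = x := ZMod.natCast_rightInverse x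
  have hunit : IsUnit ((x.val : ℕ) : ZMod (2^f)) := by rw [hval]; exact u.isUnit
  have hcop : Nat.Coprime x.val (2^f) := (ZMod.isUnit_iff_coprime _ _).mp hunit
  have hodd : Odd x.val := by
    have h2 : ¬ 2 ∣ x.val := by
      intro h
      have hco2 := Nat.Coprime.coprime_dvd_right (dvd_pow_self 2 (by omega : f ≠ 0)) hcop
      have hg : (2:ℕ) ∣ Nat.gcd x.val 2 := Nat.dvd_gcd h dvd_rfl
      rw [hco2] at hg
      omega
    exact Nat.not_even_iff_odd.mp (fun he => h2 (even_iff_two_dvd.mp he))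
  have key := odd_pow_two_modeq x.val hodd (f-2) (by omega)
  rw [show f - 2 + 2 = f by omega] at key
  have hx1 : x ^ (2^(f-2)) = 1 := by
    rw [← hval, ← Nat.cast_pow, ← Nat.cast_one (R := ZMod (2^f)), ZMod.natCast_eq_natCast_iff]
    exact key
  rw [← Units.val_eq_one, Units.val_pow_eq_pow_val]
  exact hx1

/-- `(1+q)^(q^k) = 1 + q^(k+1) u` with `q ∤ u`, for odd prime `q`. -/
lemma one_add_q_pow (q : ℕ) (hq : q.Prime) (hodd : Odd q) :
    ∀ k, ∃ u, ¬ q ∣ u ∧ (1+q)^(q^k) = 1 + q^(k+1) * u := by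
  intro k
  induction k with
  | zero =>
    refine ⟨1, ?_, by simp⟩
    intro h
    have := Nat.le_of_dvd one_pos h
    have := hq.two_le
    omega
  | succ k ih =>
    obtain ⟨u, hu, he⟩ := ih
    set x : ℕ := q^(k+1) * u with hxdef
    have hexp : (1+q)^(q^(k+1)) = (x + 1)^q := by
      rw [show q^(k+1) = q^k * q from pow_succ q k, pow_mul, he, add_comm]
    have h2q : 2 ≤ q + 1 := by have := hq.two_le; omega
    have hsplit : (∑ j ∈ Finset.range 2, x ^ j * 1 ^ (q - j) * (q.choose j)) +
        (∑ j ∈ Finset.Ico 2 (q+1), x ^ j * 1 ^ (q - j) * (q.choose j)) =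
        ∑ j ∈ Finset.range (q+1), x ^ j * 1 ^ (q - j) * (q.choose j) :=
      Finset.sum_range_add_sum_Ico _ h2q
    have h01 : ∑ j ∈ Finset.range 2, x ^ j * 1 ^ (q - j) * (q.choose j)
        = 1 + q^(k+2) * u := by
      rw [Finset.sum_range_succ, Finset.sum_range_one]
      simp [Nat.choose_one_right, hxdef]
      rw [show k+2 = (k+1)+1 from rfl, pow_succ]
      ring
    have hdvd : (q:ℕ)^(k+3) ∣ ∑ j ∈ Finset.Ico 2 (q+1), x ^ j * 1 ^ (q - j) * (q.choose j) := by
      refine Finset.dvd_sum ?_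
      intro j hj
      obtain ⟨hj2, hjq⟩ := Finset.mem_Ico.mp hj
      rcases lt_or_eq_of_le (Nat.lt_succ_iff.mp hjq) with hlt | heq
      · have hc : q ∣ q.choose j := Nat.Prime.dvd_choose_self hq (by omega) hlt
        have hx2 : (q^(k+1))^2 ∣ x ^ j := by
          rw [hxdef, mul_pow]
          exact dvd_mul_of_dvd_left (pow_dvd_pow _ hj2) _
        have hh : q^(2*(k+1)) * q ∣ x ^ j * 1 ^ (q - j) * (q.choose j) := by
          rw [one_pow, mul_one]
          exact mul_dvd_mul (by rwa [← pow_mul, mul_comm (k+1) 2] at hx2) hc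
        refine dvd_trans ?_ hh
        rw [← pow_succ]
        exact pow_dvd_pow q (by omega)
      · have hq3 : 3 ≤ q := by
          rcases hodd with ⟨m, hm⟩
          have := hq.two_le
          omega
        have hx3 : (q^(k+1))^3 ∣ x ^ j := by
          rw [hxdef, mul_pow]
          exact dvd_mul_of_dvd_left (pow_dvd_pow _ (by omega)) _
        refine dvd_trans (pow_dvd_pow q (by omega : k+3 ≤ 3*(k+1))) ?_
        rw [← pow_mul, mul_comm (k+1) 3] at hx3
        exact dvd_mul_of_dvd_left (dvd_mul_of_dvd_left hx3 _) _
    obtain ⟨M, hM⟩ := hdvd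
    refine ⟨u + q * M, fun hdd => hu ?_, ?_⟩
    · exact (Nat.dvd_add_right (dvd_mul_right q M)).mp (by rwa [add_comm] at hdd)
    · rw [hexp, add_pow]
      simp only [Nat.cast_id]
      rw [← hsplit, h01, hM,
        show k+1+1 = k+2 from rfl, show (q:ℕ)^(k+3) = q^(k+2)*q from pow_succ q (k+2)]
      ring

lemma orderOf_one_add_q (q f : ℕ) (hq : q.Prime) (hodd : Odd q) (hf : 1 ≤ f) :
    orderOf ((1+q : ℕ) : ZMod (q^f)) = q^(f-1) := by
  set z : ZMod (q^f) := ((1+q : ℕ) : ZMod (q^f)) with hz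
  obtain ⟨u, hu, he⟩ := one_add_q_pow q hq hodd (f-1)
  have hf1 : f - 1 + 1 = f := by omega
  have hpow : z ^ (q^(f-1)) = 1 := by
    rw [hz, ← Nat.cast_pow, he, hf1, ← Nat.cast_one (R := ZMod (q^f)),
      ZMod.natCast_eq_natCast_iff]
    exact modeq_one_add _ _
  have hdvd : orderOf z ∣ q^(f-1) := orderOf_dvd_of_pow_eq_one hpow
  obtain ⟨j, hj, hoj⟩ := (Nat.dvd_prime_pow hq).mp hdvd
  rcases Nat.eq_or_lt_of_le hf with h1 | h2
  · -- f = 1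
    rw [hoj]
    have hj0 : j = 0 := by omega
    rw [hj0, ← h1]
  · have hne : z ^ (q^(f-2)) ≠ 1 := by
      obtain ⟨v, hv, hev⟩ := one_add_q_pow q hq hodd (f-2)
      rw [hz, ← Nat.cast_pow, hev, show f-2+1 = f-1 by omega]
      refine natCast_one_add_ne_one ?_
      intro h1
      have h2' : (q:ℕ)^f = q^(f-1) * q := by rw [← pow_succ]; congr 1; omega
      rw [h2'] at h1
      exact hv ((mul_dvd_mul_iff_left (a := (q:ℕ)^(f-1))
        (pow_ne_zero _ hq.pos.ne')).mp h1)
    have hjf : j = f - 1 := by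
      by_contra hne2
      exact hne (orderOf_dvd_iff_pow_eq_one.mp (hoj ▸ pow_dvd_pow q (by omega : j ≤ f - 2)))
    rw [hoj, hjf]

lemma zmod_pow_pow (q : ℕ) [Fact q.Prime] (x : ZMod q) (m : ℕ) : x ^ (q^m) = x := by
  induction m with
  | zero => simp
  | succ m ih => rw [pow_succ, pow_mul, ih, ZMod.pow_card]

lemma prime_pow_claim (p e : ℕ) (hp : p.Prime) :
    ∃ g : ℕ, Nat.Coprime g (p^e) ∧
      ∀ f, f ≤ e → orderOf ((g : ℕ) : ZMod (p^f)) = carmichael (p^f) := by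
  by_cases hp2 : p = 2
  · subst hp2
    refine ⟨3, Nat.Coprime.pow_right e (by norm_num), ?_⟩
    intro f _
    rcases Nat.lt_or_ge f 3 with h3 | h3
    · interval_cases f
      · rw [pow_zero, orderOf_zmod_one, carmichael_one]
      · rw [pow_one]
        have h1 : ((3:ℕ) : ZMod 2) = 1 := by decide
        rw [h1, orderOf_one, carmichael_two]
      · rw [show (2:ℕ)^2 = 4 by norm_num, orderOf_three_zmod_four, carmichael_four]
    · haveI : NeZero ((2:ℕ)^f) := ⟨by positivity⟩
      have hu : IsUnit ((3:ℕ) : ZMod (2^f)) :=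
        (ZMod.isUnit_iff_coprime 3 (2^f)).mpr (Nat.Coprime.pow_right _ (by norm_num))
      have hcar : carmichael (2^f) = orderOf ((3:ℕ) : ZMod (2^f)) :=
        carmichael_eq_orderOf hu fun v => by
          rw [orderOf_three_zmod f h3]; exact units_pow_two_aux f h3 v
      rw [hcar]
  · have hodd : Odd p := hp.odd_of_ne_two hp2
    haveI := Fact.mk hp
    obtain ⟨u, hu⟩ := IsCyclic.exists_generator (α := (ZMod p)ˣ)
    have hordu : orderOf u = p - 1 := by
      rw [orderOf_eq_card_of_forall_mem_zpowers hu, Nat.card_eq_fintype_card, ZMod.card_units_eq_totient,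
        Nat.totient_prime hp]
    set g₁ : ℕ := (u : ZMod p).val with hg₁def
    have hg₁ : ((g₁ : ℕ) : ZMod p) = ↑u := ZMod.natCast_rightInverse _
    have hg₁cop : Nat.Coprime g₁ p := by
      have h1 : IsUnit ((g₁ : ℕ) : ZMod p) := by rw [hg₁]; exact u.isUnit
      exact (ZMod.isUnit_iff_coprime _ _).mp h1
    set g : ℕ := g₁ ^ (p ^ (e-1)) * (1 + p) with hgdef
    have hgcopp : Nat.Coprime g p :=
      Nat.Coprime.mul (hg₁cop.pow_left _)
        (Nat.coprime_add_self_left.mpr (Nat.coprime_one_left p))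
    refine ⟨g, hgcopp.pow_right e, ?_⟩
    intro f hf
    rcases Nat.eq_zero_or_pos f with rfl | hf1
    · rw [pow_zero, orderOf_zmod_one, carmichael_one]
    haveI : NeZero (p^f) := ⟨pow_ne_zero f hp.pos.ne'⟩
    have h1q := orderOf_one_add_q p f hp hodd hf1
    have hg₁copf : Nat.Coprime g₁ (p^f) := hg₁cop.pow_right f
    have hbunit : IsUnit ((g₁ : ℕ) : ZMod (p^f)) := (ZMod.isUnit_iff_coprime _ _).mpr hg₁copf
    have hphi : ((g₁ : ℕ) : ZMod (p^f)) ^ (Nat.totient (p^f)) = 1 := by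
      conv_lhs => rw [← hbunit.unit_spec]
      rw [← Units.val_pow_eq_pow_val, ZMod.pow_totient, Units.val_one]
    have hb : orderOf ((g₁ ^ (p^(e-1)) : ℕ) : ZMod (p^f)) = p - 1 := by
      refine Nat.dvd_antisymm ?_ ?_
      · rw [orderOf_dvd_iff_pow_eq_one]
        push_cast
        rw [← pow_mul]
        have hdvd : Nat.totient (p^f) ∣ p^(e-1) * (p-1) := by
          rw [Nat.totient_prime_pow hp hf1]
          exact mul_dvd_mul (pow_dvd_pow p (by omega)) dvd_rfl
        obtain ⟨c, hc⟩ := hdvd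
        rw [hc, pow_mul, hphi, one_pow]
      · have hmap := orderOf_map_dvd
          (ZMod.castHom (dvd_pow_self p (by omega : f ≠ 0)) (ZMod p)).toMonoidHom
          (((g₁ ^ (p^(e-1)) : ℕ) : ZMod (p^f)))
        have heq : (ZMod.castHom (dvd_pow_self p (by omega : f ≠ 0)) (ZMod p)).toMonoidHom
            (((g₁ ^ (p^(e-1)) : ℕ) : ZMod (p^f))) = ((u : (ZMod p)ˣ) : ZMod p) := by
          simp only [RingHom.toMonoidHom_eq_coe, MonoidHom.coe_coe, map_natCast]
          push_cast
          rw [hg₁, zmod_pow_pow]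
        rw [heq, orderOf_units, hordu] at hmap
        exact hmap
    have hcoporders : Nat.Coprime (p-1) (p^(f-1)) := by
      have h1 : ¬ p ∣ (p-1) := by
        intro h
        rcases Nat.eq_zero_or_pos (p-1) with h0 | hpos
        · have := hp.two_le; omega
        · have := Nat.le_of_dvd hpos h; omega
      exact ((hp.coprime_iff_not_dvd).mpr h1).symm.pow_right _
    have horder : orderOf ((g : ℕ) : ZMod (p^f)) = (p-1) * p^(f-1) := by
      rw [hgdef, Nat.cast_mul,
        (Commute.all _ _).orderOf_mul_eq_mul_orderOf_of_coprime (by rw [hb, h1q]; exact hcoporders),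
        hb, h1q]
    have hcar : carmichael (p^f) = orderOf ((g:ℕ) : ZMod (p^f)) := by
      refine carmichael_eq_orderOf ((ZMod.isUnit_iff_coprime _ _).mpr (hgcopp.pow_right f)) ?_
      intro v
      rw [horder, show (p-1) * p^(f-1) = Nat.totient (p^f) by
        rw [Nat.totient_prime_pow hp hf1, mul_comm]]
      exact ZMod.pow_totient v
    rw [hcar]

lemma orderOf_natCast_mul (g d₁ d₂ : ℕ) (h : Nat.Coprime d₁ d₂) :
    orderOf ((g : ℕ) : ZMod (d₁ * d₂)) =
      Nat.lcm (orderOf ((g : ℕ) : ZMod d₁)) (orderOf ((g : ℕ) : ZMod d₂)) := by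
  refine Nat.dvd_antisymm ?_ (Nat.lcm_dvd ?_ ?_)
  · rw [orderOf_dvd_iff_pow_eq_one, ← Nat.cast_pow, ← Nat.cast_one (R := ZMod (d₁ * d₂)),
      ZMod.natCast_eq_natCast_iff]
    rw [← Nat.modEq_and_modEq_iff_modEq_mul h]
    constructor
    · rw [← ZMod.natCast_eq_natCast_iff, Nat.cast_pow, Nat.cast_one]
      exact orderOf_dvd_iff_pow_eq_one.mp (Nat.dvd_lcm_left _ _)
    · rw [← ZMod.natCast_eq_natCast_iff, Nat.cast_pow, Nat.cast_one]
      exact orderOf_dvd_iff_pow_eq_one.mp (Nat.dvd_lcm_right _ _)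
  · have := orderOf_map_dvd (ZMod.castHom (dvd_mul_right d₁ d₂) (ZMod d₁)).toMonoidHom
      ((g : ℕ) : ZMod (d₁ * d₂))
    simpa using this
  · have := orderOf_map_dvd (ZMod.castHom (dvd_mul_left d₂ d₁) (ZMod d₂)).toMonoidHom
      ((g : ℕ) : ZMod (d₁ * d₂))
    simpa using this

lemma carmichael_mul (d₁ d₂ : ℕ) (h : Nat.Coprime d₁ d₂) :
    carmichael (d₁ * d₂) = Nat.lcm (carmichael d₁) (carmichael d₂) := by
  unfold carmichael
  rw [Monoid.exponent_eq_of_mulEquiv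
    ((Units.mapEquiv (ZMod.chineseRemainder h).toMulEquiv).trans MulEquiv.prodUnits),
    Monoid.exponent_prod]
  rfl

lemma master : ∀ n : ℕ, 0 < n →
    ∃ g : ℕ, Nat.Coprime g n ∧ ∀ d, d ∣ n → orderOf ((g : ℕ) : ZMod d) = carmichael d := by
  intro n
  induction n using Nat.recOnPosPrimePosCoprime with
  | prime_pow p e hpp he =>
    intro _
    obtain ⟨g, hcop, hg⟩ := prime_pow_claim p e hpp
    refine ⟨g, hcop, ?_⟩
    intro d hd
    obtain ⟨f, hf, rfl⟩ := (Nat.dvd_prime_pow hpp).mp hd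
    exact hg f hf
  | zero => intro h; omega
  | one =>
    intro _
    refine ⟨1, Nat.coprime_one_left 1, ?_⟩
    intro d hd
    rw [Nat.dvd_one.mp hd, orderOf_zmod_one, carmichael_one]
  | coprime a b ha hb hab iha ihb =>
    intro _
    obtain ⟨ga, hacop, hga⟩ := iha (by omega)
    obtain ⟨gb, hbcop, hgb⟩ := ihb (by omega)
    obtain ⟨hma, hmb⟩ := (Nat.chineseRemainder hab ga gb).prop
    haveI : NeZero a := ⟨by omega⟩
    haveI : NeZero b := ⟨by omega⟩
    set g' : ℕ := (Nat.chineseRemainder hab ga gb : ℕ)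
    have hcasta : ∀ d : ℕ, d ∣ a → ((g' : ℕ) : ZMod d) = ((ga : ℕ) : ZMod d) := fun d hd =>
      (ZMod.natCast_eq_natCast_iff _ _ _).mpr (hma.of_dvd hd)
    have hcastb : ∀ d : ℕ, d ∣ b → ((g' : ℕ) : ZMod d) = ((gb : ℕ) : ZMod d) := fun d hd =>
      (ZMod.natCast_eq_natCast_iff _ _ _).mpr (hmb.of_dvd hd)
    have hcopa : Nat.Coprime g' a := by
      have h1 : IsUnit ((g' : ℕ) : ZMod a) := by
        rw [hcasta a dvd_rfl]
        exact (ZMod.isUnit_iff_coprime _ _).mpr hacop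
      exact (ZMod.isUnit_iff_coprime _ _).mp h1
    have hcopb : Nat.Coprime g' b := by
      have h1 : IsUnit ((g' : ℕ) : ZMod b) := by
        rw [hcastb b dvd_rfl]
        exact (ZMod.isUnit_iff_coprime _ _).mpr hbcop
      exact (ZMod.isUnit_iff_coprime _ _).mp h1
    refine ⟨g', Nat.Coprime.mul_right hcopa hcopb, ?_⟩
    intro d hd
    obtain ⟨d₁, d₂, hd₁, hd₂, rfl⟩ := exists_dvd_and_dvd_of_dvd_mul hd
    have hdco : Nat.Coprime d₁ d₂ := (hab.coprime_dvd_left hd₁).coprime_dvd_right hd₂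
    rw [orderOf_natCast_mul g' d₁ d₂ hdco, carmichael_mul d₁ d₂ hdco,
      hcasta d₁ hd₁, hcastb d₂ hd₂, hga d₁ hd₁, hgb d₂ hd₂]


theorem stmt6 (n : ℕ) (hn : 0 < n) :
    ∃ p : ℕ, p.Prime ∧ ∀ d : ℕ, d ∣ n → 0 < d → lstar p d = carmichael d := by
  haveI : NeZero n := ⟨hn.ne'⟩
  obtain ⟨g, hcop, hg⟩ := master n hn
  have hgu : IsUnit ((g : ℕ) : ZMod n) := (ZMod.isUnit_iff_coprime _ _).mpr hcop
  obtain ⟨p, _, hpp, hpeq⟩ := Nat.forall_exists_prime_gt_and_eq_mod hgu 0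
  refine ⟨p, hpp, ?_⟩
  intro d hd _
  have hpcop : Nat.Coprime p n := by
    have h1 : IsUnit ((p : ℕ) : ZMod n) := by rw [hpeq]; exact hgu
    exact (ZMod.isUnit_iff_coprime _ _).mp h1
  have hpd : ¬ p ∣ d := by
    intro hdvd
    have h1 : p ∣ n := hdvd.trans hd
    have h2 : p ∣ Nat.gcd p n := Nat.dvd_gcd dvd_rfl h1
    rw [hpcop] at h2
    have := Nat.dvd_one.mp h2
    have := hpp.one_lt
    omega
  have hcompl : ordCompl[p] d = d := by
    rw [Nat.factorization_eq_zero_of_not_dvd hpd, pow_zero, Nat.div_one]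
  have hcast : ((p : ℕ) : ZMod d) = ((g : ℕ) : ZMod d) := by
    have := congrArg (ZMod.castHom hd (ZMod d)) hpeq
    simpa using this
  simp only [lstar]
  rw [hcompl, hcast, hg d hd]
end

section
/- Suppose n = p_1^{e_1}···p_k^{e_k} is φ-practical, where p_1 < p_2 < ··· < p_k are primes and e_i ≥ 1 for i = 1,…,k. Define m_0 = 1 and m_i = p_1^{e_1}···p_i^{e_i} for i = 1,…,k−1. Then p_{i+1} ≤ m_i + 2 holds for all i with 0 ≤ i ≤ k−1. That is, every φ-practical number is weakly φ-practical. -/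
open scoped Classical

theorem stmt7 (n : ℕ) (hn : 0 < n) (h : PhiPractical n) :
    WeaklyPhiPractical n := by
  refine ⟨hn, fun q hq hqn => ?_⟩
  by_contra hlt
  push_neg at hlt
  set s := n.primeFactors.filter (· < q) with hs
  set m := ∏ r ∈ s, r ^ n.factorization r with hm
  have hmdvd : m ∣ n := by
    have h1 : m ∣ ∏ r ∈ n.primeFactors, r ^ n.factorization r :=
      Finset.prod_dvd_prod_of_subset _ _ _ (Finset.filter_subset _ _)
    have h2 : ∏ r ∈ n.primeFactors, r ^ n.factorization r = n := by
      rw [← Nat.support_factorization]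
      exact Nat.factorization_prod_pow_eq_self hn.ne'
    rwa [h2] at h1
  have hmpos : 0 < m := Nat.pos_of_dvd_of_pos hmdvd hn
  have hqm : ¬ q ∣ m := by
    intro hdvd
    obtain ⟨r, hrs, hrd⟩ := hq.prime.exists_mem_finset_dvd hdvd
    obtain ⟨hrn, hrq⟩ := Finset.mem_filter.mp hrs
    have hr : r.Prime := Nat.prime_of_mem_primeFactors hrn
    have : q = r := (Nat.prime_dvd_prime_iff_eq hq hr).mp (hq.dvd_of_dvd_pow hrd)
    omega
  have hmlt : m < n := by
    rcases lt_or_eq_of_le (Nat.le_of_dvd hn hmdvd) with h' | h'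
    · exact h'
    · exact absurd (h' ▸ hqn) hqm
  -- key: divisors of n not dividing m have large totient
  have key : ∀ d ∈ n.divisors \ m.divisors, m + 2 ≤ d.totient := by
    intro d hd
    obtain ⟨hdn, hdm⟩ := Finset.mem_sdiff.mp hd
    have hd0 : 0 < d := Nat.pos_of_mem_divisors hdn
    have hddvd : d ∣ n := (Nat.mem_divisors.mp hdn).1
    have hdm' : ¬ d ∣ m := fun hh => hdm (Nat.mem_divisors.mpr ⟨hh, hmpos.ne'⟩)
    have hex : ∃ p, p.Prime ∧ p ∣ d ∧ q ≤ p := by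
      by_contra hcon
      push_neg at hcon
      apply hdm'
      rw [← Nat.factorization_le_iff_dvd hd0.ne' hmpos.ne']
      rw [Finsupp.le_iff]
      intro p hp
      have hpprime : p.Prime := Nat.prime_of_mem_primeFactors
        (by rwa [← Nat.support_factorization])
      have hpd : p ∣ d := Nat.dvd_of_mem_primeFactors
        (by rwa [← Nat.support_factorization])
      have hpq : p < q := lt_of_not_ge fun hqe => absurd hqe
        (not_le.mpr (hcon p hpprime hpd))
      have hps : p ∈ s := Finset.mem_filter.mpr
        ⟨Nat.mem_primeFactors.mpr ⟨hpprime, hpd.trans hddvd, hn.ne'⟩, hpq⟩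
      have hmf : m.factorization p = n.factorization p := by
        rw [hm, Nat.factorization_prod (fun r hr => by
          have : r.Prime := Nat.prime_of_mem_primeFactors (Finset.mem_filter.mp hr).1
          exact pow_ne_zero _ this.pos.ne')]
        rw [Finsupp.finset_sum_apply]
        have : ∀ r ∈ s, ((r ^ n.factorization r).factorization) p
            = if r = p then n.factorization r else 0 := by
          intro r hr
          have hrp : r.Prime := Nat.prime_of_mem_primeFactors (Finset.mem_filter.mp hr).1
          rw [hrp.factorization_pow, Finsupp.single_apply]
        rw [Finset.sum_congr rfl this, Finset.sum_ite_eq' s p (fun r => n.factorization r),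
          if_pos hps]
      rw [hmf]
      exact (Nat.factorization_le_iff_dvd hd0.ne' hn.ne').mpr hddvd p
    obtain ⟨p, hp, hpd, hqp⟩ := hex
    have h1 : p.totient ∣ d.totient := Nat.totient_dvd_of_dvd hpd
    have h2 : 0 < d.totient := Nat.totient_pos.mpr hd0
    have h3 : p - 1 ≤ d.totient := by
      have := Nat.le_of_dvd h2 h1
      rwa [Nat.totient_prime hp] at this
    have hp2 : 2 ≤ p := hp.two_le
    omega
  -- use φ-practicality at degree m+1
  obtain ⟨g, hgdvd, hgdeg⟩ := h (m + 1) (by omega) (by omega)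
  set g' := g.map (Int.castRingHom ℚ) with hg'
  have hg'deg : g'.natDegree = m + 1 := by
    rw [hg', Polynomial.natDegree_map_eq_of_injective
      (Int.cast_injective), hgdeg]
  have hg'dvd : g' ∣ (Polynomial.X : Polynomial ℚ) ^ n - 1 := by
    have := Polynomial.map_dvd (Int.castRingHom ℚ) hgdvd
    simpa using this
  have hsub : m.divisors ⊆ n.divisors := Nat.divisors_subset_of_dvd hn.ne' hmdvd
  have hAB : (Polynomial.X : Polynomial ℚ) ^ n - 1 =
      ((Polynomial.X : Polynomial ℚ) ^ m - 1) *
        ∏ d ∈ n.divisors \ m.divisors, Polynomial.cyclotomic d ℚ := by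
    rw [← Polynomial.prod_cyclotomic_eq_X_pow_sub_one hn ℚ,
      ← Polynomial.prod_cyclotomic_eq_X_pow_sub_one hmpos ℚ,
      mul_comm, Finset.prod_sdiff hsub]
  rw [hAB] at hg'dvd
  obtain ⟨g1, g2, hg1, hg2, hgeq⟩ := exists_dvd_and_dvd_of_dvd_mul hg'dvd
  have hg'ne : g' ≠ 0 := fun hh => by simp [hh] at hg'deg
  have hg1ne : g1 ≠ 0 := fun hh => hg'ne (by rw [hgeq, hh, zero_mul])
  have hg2ne : g2 ≠ 0 := fun hh => hg'ne (by rw [hgeq, hh, mul_zero])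
  have hdegsum : g1.natDegree + g2.natDegree = m + 1 := by
    rw [← Polynomial.natDegree_mul hg1ne hg2ne, ← hgeq, hg'deg]
  have hXm : (Polynomial.X : Polynomial ℚ) ^ m - 1 ≠ 0 := by
    have := Polynomial.X_pow_sub_C_ne_zero (R := ℚ) hmpos 1
    simpa using this
  have hg1deg : g1.natDegree ≤ m := by
    have := Polynomial.natDegree_le_of_dvd hg1 hXm
    have hdm : ((Polynomial.X : Polynomial ℚ) ^ m - 1).natDegree = m := by
      have := Polynomial.natDegree_X_pow_sub_C (R := ℚ) (n := m) (r := 1)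
      simpa using this
    omega
  have hg2deg : 1 ≤ g2.natDegree := by omega
  have hg2nu : ¬ IsUnit g2 := fun hu => by
    have := Polynomial.natDegree_eq_zero_of_isUnit hu
    omega
  obtain ⟨r, hr, hrdvd⟩ := WfDvdMonoid.exists_irreducible_factor hg2nu hg2ne
  have hrprime : Prime r := hr.prime
  obtain ⟨d, hd, hrd⟩ := hrprime.exists_mem_finset_dvd (hrdvd.trans hg2)
  have hd0 : 0 < d := Nat.pos_of_mem_divisors (Finset.mem_sdiff.mp hd).1
  have hcyc : Irreducible (Polynomial.cyclotomic d ℚ) :=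
    Polynomial.cyclotomic.irreducible_rat hd0
  obtain ⟨c, hc⟩ := hrd
  have hrne : r ≠ 0 := hrprime.ne_zero
  have hcne : c ≠ 0 := fun hh => by
    rw [hh, mul_zero] at hc
    exact (Polynomial.cyclotomic_ne_zero d ℚ) hc
  have hrdeg : r.natDegree = d.totient := by
    rcases hcyc.isUnit_or_isUnit hc with hu | hu
    · exact absurd hu hr.not_isUnit
    · have hcz : c.natDegree = 0 := Polynomial.natDegree_eq_zero_of_isUnit hu
      have := Polynomial.natDegree_cyclotomic d ℚ
      rw [hc, Polynomial.natDegree_mul hrne hcne, hcz] at this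
      omega
  have hrle : r.natDegree ≤ m + 1 := by
    have hg2g' : g2 ∣ g' := ⟨g1, by rw [hgeq, mul_comm]⟩
    have := Polynomial.natDegree_le_of_dvd (hrdvd.trans hg2g') hg'ne
    omega
  have := key d hd
  omega
end

section
/- Every λ-practical number is weakly φ-practical. That is, if n = p_1^{e_1}···p_k^{e_k} is λ-practical with primes p_1 < ··· < p_k and e_i ≥ 1, then p_{i+1} ≤ p_1^{e_1}···p_i^{e_i} + 2 for all 0 ≤ i ≤ k−1 (empty product equal to 1). -/
open scoped Classical

lemma exists_good_prime (n q : ℕ) (hn : 0 < n) (hq3 : 3 ≤ q) :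
    ∃ p : ℕ, p.Prime ∧ n < p ∧
      ∀ r ∈ n.primeFactors.filter (fun r => q ≤ r), orderOf ((p : ℕ) : ZMod r) = r - 1 := by
  set S := n.primeFactors.filter (fun r => q ≤ r) with hS
  have hSprime : ∀ r ∈ S, r.Prime := fun r hr =>
    Nat.prime_of_mem_primeFactors (Finset.mem_filter.mp hr).1
  have hSge : ∀ r ∈ S, q ≤ r := fun r hr => (Finset.mem_filter.mp hr).2
  have key : ∀ r ∈ S, ∃ b : ℕ, orderOf ((b : ℕ) : ZMod r) = r - 1 := by
    intro r hr
    haveI : Fact r.Prime := ⟨hSprime r hr⟩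
    obtain ⟨g, hg⟩ := IsCyclic.exists_generator (α := (ZMod r)ˣ)
    refine ⟨(g : ZMod r).val, ?_⟩
    have h1 : (((g : ZMod r).val : ℕ) : ZMod r) = (g : ZMod r) := by
      rw [ZMod.natCast_val, ZMod.cast_id]
    rw [h1, orderOf_units, orderOf_eq_card_of_forall_mem_zpowers hg,
      Nat.card_eq_fintype_card, ZMod.card_units_eq_totient, Nat.totient_prime (hSprime r hr)]
  choose b hb using key
  classical
  let a : ℕ → ℕ := fun r => if h : r ∈ S then b r h else 1
  have hs0 : ∀ i ∈ S, id i ≠ 0 := fun i hi => (hSprime i hi).pos.ne'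
  have pp : Set.Pairwise ↑S (Function.onFun Nat.Coprime id) := by
    intro i hi j hj hij
    exact (Nat.coprime_primes (hSprime i hi) (hSprime j hj)).mpr hij
  obtain ⟨k, hk⟩ := Nat.chineseRemainderOfFinset a id S hs0 pp
  set M := ∏ i ∈ S, id i with hM
  have hMpos : 0 < M := Finset.prod_pos (fun i hi => (hSprime i hi).pos)
  haveI : NeZero M := ⟨hMpos.ne'⟩
  have hkord : ∀ r ∈ S, orderOf ((k : ℕ) : ZMod r) = r - 1 := by
    intro r hr
    have h2 : ((k : ℕ) : ZMod r) = ((a r : ℕ) : ZMod r) :=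
      (ZMod.natCast_eq_natCast_iff _ _ _).mpr (hk r hr)
    rw [h2]
    have : a r = b r hr := dif_pos hr
    rw [this]
    exact hb r hr
  have hknd : ∀ r ∈ S, ¬ r ∣ k := by
    intro r hr hdvd
    have h0 : ((k : ℕ) : ZMod r) = 0 := (ZMod.natCast_eq_zero_iff _ _).mpr hdvd
    haveI : Fact r.Prime := ⟨hSprime r hr⟩
    have hpow := pow_orderOf_eq_one ((k : ℕ) : ZMod r)
    rw [hkord r hr, h0, zero_pow] at hpow
    · exact zero_ne_one hpow
    · have h3 := hSge r hr; omega
  have hunit : IsUnit ((k : ℕ) : ZMod M) := by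
    rw [ZMod.isUnit_iff_coprime]
    exact Nat.Coprime.prod_right fun i hi =>
      (Nat.Coprime.symm (((hSprime i hi).coprime_iff_not_dvd).mpr (hknd i hi)))
  obtain ⟨p, hpn, hpp, hpk⟩ := Nat.forall_exists_prime_gt_and_eq_mod hunit n
  refine ⟨p, hpp, hpn, ?_⟩
  intro r hr
  have hrM : (r : ℕ) ∣ M := Finset.dvd_prod_of_mem id hr
  have : (p : ZMod r) = ((k : ℕ) : ZMod r) := by
    have hmod : p ≡ k [MOD M] := (ZMod.natCast_eq_natCast_iff _ _ _).mp hpk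
    exact (ZMod.natCast_eq_natCast_iff _ _ _).mpr (hmod.of_dvd hrM)
  rw [this]
  exact hkord r hr

open Polynomial in
lemma exists_root_order (p n m : ℕ) [Fact p.Prime] (hn : 0 < n) (hpn : ¬ p ∣ n)
    (g : Polynomial (ZMod p)) (hg : g ∣ (X ^ n - 1)) (hdeg : g.natDegree = m + 1)
    (hm : 0 < m) :
    ∃ d : ℕ, d ∣ n ∧ ¬ d ∣ m ∧ ∃ t : ℕ, 1 ≤ t ∧ t ≤ m + 1 ∧ d ∣ p ^ t - 1 := by
  classical
  -- X^n - 1 is separable over ZMod p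
  have hncast : ((n : ℕ) : ZMod p) ≠ 0 := by
    rw [Ne, ZMod.natCast_eq_zero_iff]; exact hpn
  have hsepXn : (X ^ n - 1 : (ZMod p)[X]).Separable := by
    have := Polynomial.separable_X_pow_sub_C (1 : ZMod p) hncast one_ne_zero
    simpa using this
  have hgsep : g.Separable := hsepXn.of_dvd hg
  have hg0 : g ≠ 0 := fun h0 => by simp [h0] at hdeg
  set K := AlgebraicClosure (ZMod p) with hK
  set φ := algebraMap (ZMod p) K with hφ
  set gK := g.map φ with hgK
  have hgK0 : gK ≠ 0 := Polynomial.map_ne_zero hg0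
  have hgKdeg : gK.natDegree = m + 1 := by rw [hgK, Polynomial.natDegree_map, hdeg]
  have hgKsep : gK.Separable := hgsep.map
  have hsplit : gK.roots.card = gK.natDegree :=
    Polynomial.splits_iff_card_roots.mp (IsAlgClosed.splits gK)
  have hnodup : gK.roots.Nodup := Polynomial.nodup_roots hgKsep
  have hXm0 : (X ^ m - 1 : K[X]) ≠ 0 := by
    have := Polynomial.X_pow_sub_C_ne_zero hm (1 : K)
    simpa using this
  -- find a root β with β^m ≠ 1
  have hexβ : ∃ β ∈ gK.roots, β ^ m ≠ 1 := by
    by_contra hc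
    push_neg at hc
    have hsub : gK.roots.toFinset ⊆ (X ^ m - 1 : K[X]).roots.toFinset := by
      intro β hβ
      rw [Multiset.mem_toFinset] at hβ ⊢
      rw [Polynomial.mem_roots hXm0]
      have := hc β hβ
      simp [Polynomial.IsRoot, sub_eq_zero, this]
    have h1 : gK.roots.toFinset.card = m + 1 := by
      rw [Multiset.toFinset_card_of_nodup hnodup, hsplit, hgKdeg]
    have h2 : (X ^ m - 1 : K[X]).roots.toFinset.card ≤ m := by
      calc (X ^ m - 1 : K[X]).roots.toFinset.card
          ≤ (X ^ m - 1 : K[X]).roots.card := Multiset.toFinset_card_le _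
        _ ≤ (X ^ m - 1 : K[X]).natDegree := Polynomial.card_roots' _
        _ = m := by
            have := Polynomial.natDegree_X_pow_sub_C (n := m) (r := (1 : K))
            simpa using this
    have := Finset.card_le_card hsub
    omega
  obtain ⟨β, hβroot, hβm⟩ := hexβ
  have hβrt : gK.IsRoot β := Polynomial.isRoot_of_mem_roots hβroot
  have hβn : β ^ n = 1 := by
    have hdvdK : gK ∣ (X ^ n - 1 : K[X]) := by
      have := Polynomial.map_dvd φ hg
      simpa using this
    have := Polynomial.eval_eq_zero_of_dvd_of_eval_eq_zero hdvdK hβrt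
    simpa [sub_eq_zero] using this
  have hβ0 : β ≠ 0 := by
    intro h0
    rw [h0, zero_pow hn.ne'] at hβn
    exact zero_ne_one hβn
  set d := orderOf β with hd
  have hdn : d ∣ n := orderOf_dvd_of_pow_eq_one hβn
  have hdm : ¬ d ∣ m := fun hdvd => hβm (orderOf_dvd_iff_pow_eq_one.mp hdvd)
  refine ⟨d, hdn, hdm, ?_⟩
  -- minimal polynomial
  have hβint : IsIntegral (ZMod p) β := (Algebra.IsAlgebraic.isAlgebraic β).isIntegral
  have haev : (Polynomial.aeval β) g = 0 := by
    rw [Polynomial.aeval_def, ← Polynomial.eval_map]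
    exact hβrt
  have hmdvd : minpoly (ZMod p) β ∣ g := minpoly.dvd _ _ haev
  set t := (minpoly (ZMod p) β).natDegree with ht
  have ht1 : 1 ≤ t := minpoly.natDegree_pos hβint
  have htle : t ≤ m + 1 := hdeg ▸ Polynomial.natDegree_le_of_dvd hmdvd hg0
  refine ⟨t, ht1, htle, ?_⟩
  -- the field F = ZMod p (β)
  set F := IntermediateField.adjoin (ZMod p) {β} with hF
  haveI : FiniteDimensional (ZMod p) F := IntermediateField.adjoin.finiteDimensional hβint
  haveI : Finite F := Module.finite_of_finite (ZMod p)
  haveI : Fintype F := Fintype.ofFinite F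
  have hcard : Fintype.card F = p ^ t := by
    rw [Module.card_eq_pow_finrank (K := ZMod p) (V := F), ZMod.card,
      IntermediateField.adjoin.finrank hβint]
  have hβF : β ∈ F := IntermediateField.mem_adjoin_simple_self (ZMod p) β
  set βF : F := ⟨β, hβF⟩ with hβFdef
  have hβF0 : βF ≠ 0 := by
    intro h0
    apply hβ0
    exact congrArg Subtype.val h0
  have hpow : βF ^ (Fintype.card F - 1) = 1 := FiniteField.pow_card_sub_one_eq_one βF hβF0
  have hβpow : β ^ (p ^ t - 1) = 1 := by
    have := congrArg Subtype.val hpow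
    rw [hcard] at this
    simpa using this
  exact orderOf_dvd_of_pow_eq_one hβpow

theorem stmt8 (n : ℕ) (hn : 0 < n) (h : LambdaPractical n) :
    WeaklyPhiPractical n := by
  refine ⟨hn, ?_⟩
  intro q hq hqn
  by_contra hlt
  push_neg at hlt
  set m := ∏ r ∈ n.primeFactors.filter (· < q), r ^ n.factorization r with hmdef
  have hq3 : m + 3 ≤ q := hlt
  -- m divides n
  have hmn : m ∣ n := by
    have h1 : m ∣ ∏ r ∈ n.primeFactors, r ^ n.factorization r :=
      Finset.prod_dvd_prod_of_subset _ _ _ (Finset.filter_subset _ _)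
    have h2 : ∏ r ∈ n.primeFactors, r ^ n.factorization r = n := by
      conv_rhs => rw [← Nat.factorization_prod_pow_eq_self hn.ne']
      simp [Finsupp.prod, Nat.support_factorization]
    rwa [h2] at h1
  have hm0 : m ≠ 0 := fun h0 => by
    rw [h0] at hmn; exact hn.ne' (Nat.eq_zero_of_zero_dvd hmn)
  have hmpos : 0 < m := Nat.pos_of_ne_zero hm0
  -- m + 1 ≤ n
  have hcop : Nat.Coprime m q := by
    apply Nat.Coprime.prod_left
    intro r hr
    obtain ⟨hr1, hr2⟩ := Finset.mem_filter.mp hr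
    have hrp := Nat.prime_of_mem_primeFactors hr1
    exact Nat.Coprime.pow_left _ ((Nat.coprime_primes hrp hq).mpr (Nat.ne_of_lt hr2))
  have hmqn : m * q ∣ n := Nat.Coprime.mul_dvd_of_dvd_of_dvd hcop hmn hqn
  have hm1n : m + 1 ≤ n := by
    have := Nat.le_of_dvd hn hmqn
    nlinarith [hq.two_le]
  -- pick a good prime
  obtain ⟨p, hpp, hpn, hpord⟩ := exists_good_prime n q hn (by omega)
  haveI : Fact p.Prime := ⟨hpp⟩
  have hpnd : ¬ p ∣ n := fun hd => absurd (Nat.le_of_dvd hn hd) (by omega)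
  obtain ⟨g, hgdvd, hgdeg⟩ := h p hpp (m + 1) (by omega) hm1n
  obtain ⟨d, hdn, hdm, t, ht1, htle, hdvd⟩ :=
    exists_root_order p n m hn hpnd g hgdvd hgdeg hmpos
  -- find a big prime factor of d
  have hd0 : d ≠ 0 := fun h0 => by
    rw [h0] at hdn; exact hn.ne' (Nat.eq_zero_of_zero_dvd hdn)
  have hex : ∃ q' : ℕ, q'.Prime ∧ q' ∣ d ∧ q ≤ q' := by
    by_contra hc
    push_neg at hc
    apply hdm
    rw [← Nat.factorization_le_iff_dvd hd0 hm0]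
    rw [Finsupp.le_iff]
    intro r hr
    rw [Nat.support_factorization] at hr
    have hrp := Nat.prime_of_mem_primeFactors hr
    have hrd : r ∣ d := Nat.dvd_of_mem_primeFactors hr
    have hrq : r < q := hc r hrp hrd
    have hrn : r ∣ n := hrd.trans hdn
    have hmem : r ∈ n.primeFactors.filter (· < q) := by
      rw [Finset.mem_filter]
      exact ⟨Nat.mem_primeFactors.mpr ⟨hrp, hrn, hn.ne'⟩, hrq⟩
    have h1 : r ^ n.factorization r ∣ m :=
      Finset.dvd_prod_of_mem (fun r => r ^ n.factorization r) hmem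
    have h2 : n.factorization r ≤ m.factorization r :=
      (Nat.Prime.pow_dvd_iff_le_factorization hrp hm0).mp h1
    have h3 : d.factorization r ≤ n.factorization r :=
      (Nat.factorization_le_iff_dvd hd0 hn.ne').mpr hdn r
    omega
  obtain ⟨q', hq'p, hq'd, hq'ge⟩ := hex
  -- q' is a prime factor of n, at least q
  have hq'n : q' ∣ n := hq'd.trans hdn
  have hq'S : q' ∈ n.primeFactors.filter (fun r => q ≤ r) := by
    rw [Finset.mem_filter]
    exact ⟨Nat.mem_primeFactors.mpr ⟨hq'p, hq'n, hn.ne'⟩, hq'ge⟩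
  have hord := hpord q' hq'S
  -- q' divides p^t - 1
  have hq'dvd : q' ∣ p ^ t - 1 := hq'd.trans hdvd
  have hpt1 : 1 ≤ p ^ t := Nat.one_le_pow _ _ hpp.pos
  have hcast : ((p : ℕ) : ZMod q') ^ t = 1 := by
    have h0 : ((p ^ t - 1 : ℕ) : ZMod q') = 0 := (ZMod.natCast_eq_zero_iff _ _).mpr hq'dvd
    have heq : (p ^ t : ℕ) = (p ^ t - 1) + 1 := by omega
    calc ((p : ℕ) : ZMod q') ^ t = ((p ^ t : ℕ) : ZMod q') := by push_cast; ring
      _ = ((p ^ t - 1 : ℕ) : ZMod q') + 1 := by rw [heq]; push_cast; ring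
      _ = 1 := by rw [h0, zero_add]
  have hodvd : orderOf ((p : ℕ) : ZMod q') ∣ t := orderOf_dvd_of_pow_eq_one hcast
  rw [hord] at hodvd
  have : q' - 1 ≤ t := Nat.le_of_dvd (by omega) hodvd
  omega
end

section
/- Let M be a φ-practical number and p a prime with gcd(p, M) = 1. Then pM is φ-practical if and only if p ≤ M + 2. Moreover, for every integer k ≥ 2, p^k·M is φ-practical if and only if p ≤ M + 1. -/
open scoped Classical

open Polynomial Finset

lemma aux_dvd_prod {F : Type*} [Field F] (f : ℕ → F[X]) (t : Finset ℕ)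
    (hf : ∀ d ∈ t, Irreducible (f d)) (hmon : ∀ d ∈ t, (f d).Monic) :
    ∀ g : F[X], g.Monic → g ∣ ∏ d ∈ t, f d →
      ∃ S ⊆ t, g.natDegree = ∑ d ∈ S, (f d).natDegree := by
  classical
  induction t using Finset.induction_on with
  | empty =>
    intro g hg hdvd
    simp only [Finset.prod_empty] at hdvd
    refine ⟨∅, Finset.Subset.refl _, ?_⟩
    rw [hg.eq_one_of_isUnit (isUnit_of_dvd_one hdvd)]
    simp
  | @insert a t ha ih =>
    intro g hg hdvd
    rw [Finset.prod_insert ha] at hdvd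
    have hfa : Irreducible (f a) := hf a (Finset.mem_insert_self a t)
    rcases hfa.isCoprime_or_dvd g with hcop | hdvd'
    · obtain ⟨S, hS, hdeg⟩ := ih (fun d hd => hf d (Finset.mem_insert_of_mem hd))
        (fun d hd => hmon d (Finset.mem_insert_of_mem hd)) g hg
        (hcop.symm.dvd_of_dvd_mul_left hdvd)
      exact ⟨S, hS.trans (Finset.subset_insert a t), hdeg⟩
    · obtain ⟨g', rfl⟩ := hdvd'
      have hfa0 : f a ≠ 0 := hfa.ne_zero
      have hg' : g'.Monic := (hmon a (Finset.mem_insert_self a t)).of_mul_monic_left hg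
      have hdvd2 : g' ∣ ∏ d ∈ t, f d :=
        (mul_dvd_mul_iff_left hfa0).mp hdvd
      obtain ⟨S, hS, hdeg⟩ := ih (fun d hd => hf d (Finset.mem_insert_of_mem hd))
        (fun d hd => hmon d (Finset.mem_insert_of_mem hd)) g' hg' hdvd2
      refine ⟨insert a S, Finset.insert_subset_insert a hS, ?_⟩
      have haS : a ∉ S := fun h => ha (hS h)
      rw [Finset.sum_insert haS, ← hdeg, natDegree_mul hfa0 hg'.ne_zero]

def TotRep (n m : ℕ) : Prop := ∃ S, S ⊆ n.divisors ∧ ∑ d ∈ S, Nat.totient d = m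

lemma phi_of_rep {n : ℕ} (hn : 0 < n) (h : ∀ m, 1 ≤ m → m ≤ n → TotRep n m) :
    PhiPractical n := by
  intro m h1 h2
  obtain ⟨S, hS, hsum⟩ := h m h1 h2
  refine ⟨∏ d ∈ S, cyclotomic d ℤ, ?_, ?_⟩
  · rw [← prod_cyclotomic_eq_X_pow_sub_one hn ℤ]
    exact Finset.prod_dvd_prod_of_subset S n.divisors _ hS
  · rw [natDegree_prod _ _ (fun d _ => cyclotomic_ne_zero d ℤ), ← hsum]
    exact Finset.sum_congr rfl fun d _ => natDegree_cyclotomic d ℤ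

lemma rep_of_phi {n : ℕ} (hn : 0 < n) (h : PhiPractical n) :
    ∀ m, 1 ≤ m → m ≤ n → TotRep n m := by
  intro m h1 h2
  obtain ⟨g, hgdvd, hgdeg⟩ := h m h1 h2
  have hX : (X ^ n - 1 : ℤ[X]) ≠ 0 := by
    intro hzero
    have h1n : ((X ^ n - 1 : ℤ[X])).natDegree = n := natDegree_X_pow_sub_C
    rw [hzero, natDegree_zero] at h1n
    exact hn.ne h1n
  have hg0 : g ≠ 0 := fun h0 => hX (zero_dvd_iff.mp (h0 ▸ hgdvd))
  set gq : ℚ[X] := g.map (algebraMap ℤ ℚ) with hgq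
  have hgq0 : gq ≠ 0 := by
    rw [hgq, Ne, Polynomial.map_eq_zero_iff (algebraMap ℤ ℚ).injective_int]
    exact hg0
  have hgqdeg : gq.natDegree = m := by
    rw [hgq, natDegree_map_eq_of_injective (algebraMap ℤ ℚ).injective_int, hgdeg]
  have hgqdvd : gq ∣ (X ^ n - 1 : ℚ[X]) := by
    have := Polynomial.map_dvd (algebraMap ℤ ℚ) hgdvd
    rw [Polynomial.map_sub, Polynomial.map_pow, Polynomial.map_X, Polynomial.map_one] at this
    exact this
  set g1 : ℚ[X] := gq * C gq.leadingCoeff⁻¹ with hg1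
  have hg1monic : g1.Monic := monic_mul_leadingCoeff_inv hgq0
  have hg1deg : g1.natDegree = m := by
    rw [hg1, natDegree_mul hgq0 (by simp [leadingCoeff_ne_zero.mpr hgq0]), natDegree_C, add_zero,
      hgqdeg]
  have hfac : gq = g1 * C gq.leadingCoeff := by
    rw [hg1, mul_assoc, ← C_mul, inv_mul_cancel₀ (leadingCoeff_ne_zero.mpr hgq0), C_1, mul_one]
  have hg1dvd : g1 ∣ (X ^ n - 1 : ℚ[X]) :=
    dvd_trans ⟨C gq.leadingCoeff, hfac⟩ hgqdvd
  rw [← prod_cyclotomic_eq_X_pow_sub_one hn ℚ] at hg1dvd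
  obtain ⟨S, hS, hdeg⟩ := aux_dvd_prod (fun d => cyclotomic d ℚ) n.divisors
    (fun d hd => cyclotomic.irreducible_rat (Nat.pos_of_mem_divisors hd))
    (fun d _ => cyclotomic.monic d ℚ) g1 hg1monic hg1dvd
  refine ⟨S, hS, ?_⟩
  rw [← hg1deg, hdeg]
  exact Finset.sum_congr rfl fun d _ => (natDegree_cyclotomic d ℚ).symm


section Comb

variable {M p : ℕ} (hM : 0 < M) (hp : p.Prime) (hcop : Nat.Coprime p M)

/-- Splitting a divisor of `p^k * M`. -/
lemma divisor_split (hp : p.Prime) (hcop : Nat.Coprime p M) (hM : 0 < M) {k d : ℕ}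
    (hd : d ∣ p ^ k * M) (hd0 : d ≠ 0) :
    ∃ i d', i ≤ k ∧ d' ∣ M ∧ d = p ^ i * d' ∧
      d.totient = (p ^ i).totient * d'.totient := by
  set i := d.factorization p with hi
  set d' := ordCompl[p] d with hd'
  have hfac : p ^ i * d' = d := Nat.ordProj_mul_ordCompl_eq_self d p
  have hpd' : ¬ p ∣ d' := Nat.not_dvd_ordCompl hp hd0
  have hcopd' : Nat.Coprime (p ^ k) d' := Nat.Coprime.pow_left _
    ((Nat.Prime.coprime_iff_not_dvd hp).mpr hpd')
  have hd'M : d' ∣ M := by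
    have h1 : d' ∣ p ^ k * M := dvd_trans (Nat.ordCompl_dvd d p) hd
    exact (Nat.Coprime.dvd_of_dvd_mul_left (Nat.Coprime.symm hcopd') h1)
  have hik : i ≤ k := by
    have h1 : p ^ i ∣ p ^ k * M := dvd_trans (Nat.ordProj_dvd d p) hd
    have h2 : p ^ i ∣ p ^ k :=
      (Nat.Coprime.dvd_of_dvd_mul_right (Nat.Coprime.pow_left _ hcop) h1)
    exact (Nat.pow_dvd_pow_iff_le_right hp.one_lt).mp h2
  refine ⟨i, d', hik, hd'M, hfac.symm, ?_⟩
  rw [← hfac]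
  exact Nat.totient_mul ((Nat.Coprime.pow_left _ ((Nat.Prime.coprime_iff_not_dvd hp).mpr hpd')))

end Comb

lemma rep_zero (n : ℕ) : TotRep n 0 := ⟨∅, by simp, by simp⟩

lemma rep_all {M : ℕ} (hM : 0 < M) (h : PhiPractical M) :
    ∀ a, a ≤ M → TotRep M a := by
  intro a ha
  rcases Nat.eq_zero_or_pos a with rfl | ha0
  · exact rep_zero M
  · exact rep_of_phi hM h a ha0 ha

lemma rep_lift {M p : ℕ} (hM : 0 < M) (hp : p.Prime) (hcop : Nat.Coprime p M)
    (k : ℕ) (a : ℕ → ℕ) (ha : ∀ j, j ≤ k → TotRep M (a j)) :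
    TotRep (p ^ k * M) (∑ j ∈ Finset.range (k + 1), (p ^ j).totient * a j) := by
  classical
  have hpM : ¬ p ∣ M := (Nat.Prime.coprime_iff_not_dvd hp).mp hcop
  have hS : ∀ j, ∃ S, S ⊆ M.divisors ∧ (j ≤ k → ∑ d ∈ S, Nat.totient d = a j) := by
    intro j
    by_cases hj : j ≤ k
    · obtain ⟨S, h1, h2⟩ := ha j hj
      exact ⟨S, h1, fun _ => h2⟩
    · exact ⟨∅, by simp, fun h => absurd h hj⟩
  choose S hS1 hS2 using hS
  refine ⟨Finset.biUnion (Finset.range (k + 1)) (fun j => (S j).image (p ^ j * ·)), ?_, ?_⟩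
  · intro x hx
    simp only [Finset.mem_biUnion, Finset.mem_image, Finset.mem_range] at hx
    obtain ⟨j, hj, d, hd, rfl⟩ := hx
    have hdM : d ∣ M := Nat.dvd_of_mem_divisors (hS1 j hd)
    rw [Nat.mem_divisors]
    exact ⟨mul_dvd_mul (pow_dvd_pow p (Nat.lt_succ_iff.mp hj)) hdM,
      Nat.mul_ne_zero (pow_ne_zero _ hp.pos.ne') hM.ne'⟩
  · have hdisj : ∀ i ∈ Finset.range (k+1), ∀ j ∈ Finset.range (k+1), i ≠ j →
        Disjoint ((S i).image (p ^ i * ·)) ((S j).image (p ^ j * ·)) := by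
      have key : ∀ i j : ℕ, i < j →
          Disjoint ((S i).image (p ^ i * ·)) ((S j).image (p ^ j * ·)) := by
        intro i j hij
        rw [Finset.disjoint_left]
        rintro x hx hy
        simp only [Finset.mem_image] at hx hy
        obtain ⟨d, hd, hxd⟩ := hx
        obtain ⟨e, he, hye⟩ := hy
        have hdM : d ∣ M := Nat.dvd_of_mem_divisors (hS1 i hd)
        have heq : p ^ i * d = p ^ i * (p ^ (j - i) * e) := by
          rw [hxd, ← hye, ← mul_assoc, ← pow_add]
          congr 2
          omega
        have hde : d = p ^ (j - i) * e := Nat.eq_of_mul_eq_mul_left (pow_pos hp.pos i) heq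
        have hpd : p ∣ d := by
          rw [hde]
          exact Dvd.dvd.mul_right (dvd_pow_self p (by omega)) e
        exact hpM (hpd.trans hdM)
      intro i _ j _ hij
      rcases lt_or_gt_of_ne hij with h | h
      · exact key i j h
      · exact (key j i h).symm
    rw [Finset.sum_biUnion hdisj]
    refine Finset.sum_congr rfl fun j hj => ?_
    rw [Finset.sum_image]
    · have : ∀ d ∈ S j, Nat.totient (p ^ j * d) = (p ^ j).totient * d.totient := by
        intro d hd
        exact Nat.totient_mul ((Nat.Coprime.pow_left _ hcop).coprime_dvd_right
          (Nat.dvd_of_mem_divisors (hS1 j hd)))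
      rw [Finset.sum_congr rfl this, ← Finset.mul_sum, hS2 j (Nat.lt_succ_iff.mp
        (Finset.mem_range.mp hj))]
    · intro x _ y _ hxy
      exact Nat.eq_of_mul_eq_mul_left (pow_pos hp.pos j) hxy

lemma cover_gen {M p : ℕ} (hM : 0 < M) (hp : p.Prime) (hple : p ≤ M + 1) :
    ∀ k m, m ≤ p ^ k * M → ∃ a : ℕ → ℕ, (∀ j, a j ≤ M) ∧
      ∑ j ∈ Finset.range (k + 1), (p ^ j).totient * a j = m := by
  intro k
  induction k with
  | zero =>
    intro m hm
    rw [pow_zero, one_mul] at hm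
    exact ⟨fun _ => m, fun _ => hm, by simp⟩
  | succ k ih =>
    intro m hm
    set t := (p ^ (k + 1)).totient with ht
    have htval : t = p ^ k * (p - 1) := by
      rw [ht, Nat.totient_prime_pow hp (Nat.succ_pos k)]
      simp
    have ht0 : 0 < t := by
      rw [htval]
      exact Nat.mul_pos (pow_pos hp.pos k) (by have := hp.two_le; omega)
    have hex : ∃ c, c ≤ M ∧ t * c ≤ m ∧ m - t * c ≤ p ^ k * M := by
      have hdivle : t * (m / t) ≤ m := Nat.mul_div_le m t
      rcases le_or_gt (m / t) M with h | h
      · refine ⟨m / t, h, hdivle, ?_⟩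
        have hmod : m % t = m - t * (m / t) := by rw [Nat.mod_def]
        have hlt : m % t < t := Nat.mod_lt _ ht0
        have h3 : t ≤ p ^ k * M := by
          rw [htval]
          exact Nat.mul_le_mul_left _ (by have := hp.two_le; omega)
        rw [← hmod]
        exact (hlt.trans_le h3).le
      · have h1 : t * (M + 1) ≤ t * (m / t) := Nat.mul_le_mul_left t h
        have h2 : t * (M + 1) = t * M + t := by ring
        have key : p ^ (k + 1) * M = t * M + p ^ k * M := by
          have hpp : p - 1 + 1 = p := Nat.succ_pred_eq_of_pos hp.pos
          calc p ^ (k + 1) * M = p ^ k * (p - 1 + 1) * M := by rw [hpp, pow_succ]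
          _ = p ^ k * (p - 1) * M + p ^ k * M := by ring
          _ = t * M + p ^ k * M := by rw [htval]
        exact ⟨M, le_refl M, by omega, by omega⟩
    obtain ⟨c, hcM, htc, hr⟩ := hex
    obtain ⟨a, ha1, ha2⟩ := ih (m - t * c) hr
    refine ⟨Function.update a (k + 1) c, fun j => ?_, ?_⟩
    · by_cases hj : j = k + 1
      · rw [hj, Function.update_self]; exact hcM
      · rw [Function.update_of_ne hj]; exact ha1 j
    · rw [Finset.sum_range_succ, Function.update_self]
      have heq : ∑ j ∈ Finset.range (k + 1), (p ^ j).totient * Function.update a (k + 1) c j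
          = ∑ j ∈ Finset.range (k + 1), (p ^ j).totient * a j := by
        refine Finset.sum_congr rfl fun j hj => ?_
        rw [Finset.mem_range] at hj
        rw [Function.update_of_ne (by omega)]
      rw [heq, ha2, ← ht]
      omega

lemma cover_one {M p : ℕ} (hM : 0 < M) (hp : p.Prime) (hple : p ≤ M + 2) :
    ∀ m, m ≤ p * M → ∃ a : ℕ → ℕ, (∀ j, a j ≤ M) ∧
      ∑ j ∈ Finset.range 2, (p ^ j).totient * a j = m := by
  intro m hm
  have hp1 : 1 ≤ p - 1 := by have := hp.two_le; omega
  have hex : ∃ c, c ≤ M ∧ (p - 1) * c ≤ m ∧ m - (p - 1) * c ≤ M := by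
    have hdivle : (p - 1) * (m / (p - 1)) ≤ m := Nat.mul_div_le m (p - 1)
    rcases le_or_gt (m / (p - 1)) M with h | h
    · refine ⟨m / (p - 1), h, hdivle, ?_⟩
      have hmod : m % (p - 1) = m - (p - 1) * (m / (p - 1)) := by rw [Nat.mod_def]
      have hlt : m % (p - 1) < p - 1 := Nat.mod_lt _ (by omega)
      omega
    · have h1 : (p - 1) * (M + 1) ≤ (p - 1) * (m / (p - 1)) := Nat.mul_le_mul_left _ h
      have h2 : (p - 1) * (M + 1) = (p - 1) * M + (p - 1) := by ring
      have key : p * M = (p - 1) * M + M := by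
        have hpp : p - 1 + 1 = p := Nat.succ_pred_eq_of_pos hp.pos
        calc p * M = (p - 1 + 1) * M := by rw [hpp]
        _ = (p - 1) * M + M := by ring
      exact ⟨M, le_refl M, by omega, by omega⟩
  obtain ⟨c, hcM, htc, hr⟩ := hex
  refine ⟨Function.update (fun _ => c) 0 (m - (p - 1) * c), fun j => ?_, ?_⟩
  · by_cases hj : j = 0
    · rw [hj, Function.update_self]; exact hr
    · rw [Function.update_of_ne hj]; exact hcM
  · rw [Finset.sum_range_succ, Finset.sum_range_one, Function.update_self,
      Function.update_of_ne one_ne_zero]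
    rw [pow_zero, pow_one, Nat.totient_one, Nat.totient_prime hp, one_mul]
    omega

lemma sum_totient_le_of_subset {M : ℕ} {S : Finset ℕ} (hS : S ⊆ M.divisors) :
    ∑ d ∈ S, Nat.totient d ≤ M := by
  calc ∑ d ∈ S, Nat.totient d ≤ ∑ d ∈ M.divisors, Nat.totient d :=
        Finset.sum_le_sum_of_subset hS
  _ = M := Nat.sum_totient M

lemma not_rep_one {M p : ℕ} (hM : 0 < M) (hp : p.Prime) (hcop : Nat.Coprime p M)
    (hbig : M + 3 ≤ p) : ¬ TotRep (p * M) (M + 1) := by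
  rintro ⟨S, hSsub, hsum⟩
  by_cases hex : ∃ d ∈ S, p ∣ d
  · obtain ⟨d, hdS, hpd⟩ := hex
    have hd0 : 0 < d := Nat.pos_of_mem_divisors (hSsub hdS)
    have hdvd : p - 1 ∣ d.totient := by
      have := Nat.totient_dvd_of_dvd hpd
      rwa [Nat.totient_prime hp] at this
    have hphi : 0 < d.totient := Nat.totient_pos.mpr hd0
    have hge : p - 1 ≤ d.totient := Nat.le_of_dvd hphi hdvd
    have hle : d.totient ≤ M + 1 := by
      rw [← hsum]
      exact Finset.single_le_sum (fun i _ => Nat.zero_le _) hdS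
    omega
  · push_neg at hex
    have hSM : S ⊆ M.divisors := by
      intro d hd
      have hdvd : d ∣ p * M := Nat.dvd_of_mem_divisors (hSsub hd)
      have hcd : Nat.Coprime d p := ((hp.coprime_iff_not_dvd).mpr (hex d hd)).symm
      rw [Nat.mem_divisors]
      exact ⟨(Nat.Coprime.dvd_of_dvd_mul_left hcd hdvd), hM.ne'⟩
    have := sum_totient_le_of_subset hSM
    omega

lemma not_rep_two {M p k : ℕ} (hM : 0 < M) (hp : p.Prime) (hcop : Nat.Coprime p M)
    (hk : 2 ≤ k) (hbig : M + 2 ≤ p) : ¬ TotRep (p ^ k * M) (p * M + 1) := by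
  rintro ⟨S, hSsub, hsum⟩
  classical
  have hpM : ¬ p ∣ M := (Nat.Prime.coprime_iff_not_dvd hp).mp hcop
  by_cases hex : ∃ d ∈ S, p ^ 2 ∣ d
  · obtain ⟨d, hdS, hpd⟩ := hex
    have hd0 : 0 < d := Nat.pos_of_mem_divisors (hSsub hdS)
    have hdvd : p * (p - 1) ∣ d.totient := by
      have h1 := Nat.totient_dvd_of_dvd hpd
      rwa [Nat.totient_prime_pow hp (by norm_num), pow_one] at h1
    have hphi : 0 < d.totient := Nat.totient_pos.mpr hd0
    have hge : p * (p - 1) ≤ d.totient := Nat.le_of_dvd hphi hdvd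
    have hle : d.totient ≤ p * M + 1 := by
      rw [← hsum]
      exact Finset.single_le_sum (fun i _ => Nat.zero_le _) hdS
    have hmul : p * (M + 1) ≤ p * (p - 1) := Nat.mul_le_mul_left p (by omega)
    have hexp : p * (M + 1) = p * M + p := by ring
    have := hp.two_le
    omega
  · push_neg at hex
    -- split S into parts not divisible and divisible by p
    have hsplit : ∑ d ∈ S.filter (fun d => p ∣ d), Nat.totient d
        + ∑ d ∈ S.filter (fun d => ¬ p ∣ d), Nat.totient d = p * M + 1 := by
      rw [← hsum, Finset.sum_filter_add_sum_filter_not S (fun d => p ∣ d)]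
    have h0 : ∑ d ∈ S.filter (fun d => ¬ p ∣ d), Nat.totient d ≤ M := by
      apply sum_totient_le_of_subset
      intro d hd
      rw [Finset.mem_filter] at hd
      have hdvd : d ∣ p ^ k * M := Nat.dvd_of_mem_divisors (hSsub hd.1)
      have hcd : Nat.Coprime d (p ^ k) :=
        (Nat.Coprime.pow_left _ ((hp.coprime_iff_not_dvd).mpr hd.2)).symm
      rw [Nat.mem_divisors]
      exact ⟨Nat.Coprime.dvd_of_dvd_mul_left hcd hdvd, hM.ne'⟩
    have h1 : ∑ d ∈ S.filter (fun d => p ∣ d), Nat.totient d ≤ (p - 1) * M := by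
      set T := S.filter (fun d => p ∣ d) with hT
      -- each d in T : d = p * d' with d' ∣ M, totient d = (p-1) * totient d'
      have hdesc : ∀ d ∈ T, (d / p) ∣ M ∧ d = p * (d / p) ∧
          Nat.totient d = (p - 1) * Nat.totient (d / p) := by
        intro d hd
        rw [hT, Finset.mem_filter] at hd
        obtain ⟨hdS, hpd⟩ := hd
        have hd0 : d ≠ 0 := (Nat.pos_of_mem_divisors (hSsub hdS)).ne'
        obtain ⟨i, d', hik, hd'M, hdd, htot⟩ :=
          divisor_split hp hcop hM (Nat.dvd_of_mem_divisors (hSsub hdS)) hd0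
        have hpd' : ¬ p ∣ d' := fun hc => hpM (hc.trans hd'M)
        have hi1 : i = 1 := by
          rcases Nat.lt_or_ge i 1 with h | h
          · interval_cases i
            · rw [hdd, pow_zero, one_mul] at hpd
              exact absurd hpd hpd'
          · rcases Nat.lt_or_ge i 2 with h2 | h2
            · omega
            · exfalso
              apply hex d _ ?_
              · exact hdS
              · rw [hdd]
                exact Dvd.dvd.mul_right (pow_dvd_pow p h2) d'
        rw [hi1, pow_one] at hdd htot
        have hdiv : d / p = d' := by rw [hdd]; exact Nat.mul_div_cancel_left d' hp.pos
        refine ⟨hdiv ▸ hd'M, by rw [hdiv, ← hdd], ?_⟩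
        rw [hdiv, htot, Nat.totient_prime hp]
      calc ∑ d ∈ T, Nat.totient d = ∑ d ∈ T, (p - 1) * Nat.totient (d / p) :=
            Finset.sum_congr rfl fun d hd => (hdesc d hd).2.2
      _ = (p - 1) * ∑ d ∈ T, Nat.totient (d / p) := by rw [Finset.mul_sum]
      _ = (p - 1) * ∑ d' ∈ T.image (· / p), Nat.totient d' := by
            rw [Finset.sum_image]
            intro x hx y hy hxy
            have hxe := (hdesc x hx).2.1
            have hye := (hdesc y hy).2.1
            rw [hxe, hye]; exact congrArg (p * ·) hxy
      _ ≤ (p - 1) * M := by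
            apply Nat.mul_le_mul_left
            apply sum_totient_le_of_subset
            intro d' hd'
            rw [Finset.mem_image] at hd'
            obtain ⟨d, hd, rfl⟩ := hd'
            rw [Nat.mem_divisors]
            exact ⟨(hdesc d hd).1, hM.ne'⟩
    have hkey : M + (p - 1) * M = p * M := by
      have hpp : p - 1 + 1 = p := Nat.succ_pred_eq_of_pos hp.pos
      calc M + (p - 1) * M = (p - 1 + 1) * M := by ring
      _ = p * M := by rw [hpp]
    omega

theorem stmt9 (M p : ℕ) (hM : 0 < M) (hMphi : PhiPractical M) (hp : p.Prime)
    (hcop : Nat.gcd p M = 1) :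
    (PhiPractical (p * M) ↔ p ≤ M + 2) ∧
    (∀ k : ℕ, 2 ≤ k → (PhiPractical (p ^ k * M) ↔ p ≤ M + 1)) := by
  have hcp : Nat.Coprime p M := hcop
  have hp2 := hp.two_le
  have hpM0 : 0 < p * M := Nat.mul_pos hp.pos hM
  constructor
  · constructor
    · -- PhiPractical (p * M) → p ≤ M + 2
      intro h
      by_contra hh
      push_neg at hh
      have hbig : M + 3 ≤ p := by omega
      have hle : M + 1 ≤ p * M := by
        calc M + 1 ≤ M + M := by omega
        _ = 2 * M := by ring
        _ ≤ p * M := Nat.mul_le_mul_right M hp2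
      exact not_rep_one hM hp hcp hbig (rep_of_phi hpM0 h (M + 1) (by omega) hle)
    · -- p ≤ M + 2 → PhiPractical (p * M)
      intro hle
      apply phi_of_rep hpM0
      intro m h1 h2
      obtain ⟨a, ha1, ha2⟩ := cover_one hM hp hle m h2
      have := rep_lift hM hp hcp 1 a (fun j _ => rep_all hM hMphi (a j) (ha1 j))
      rw [pow_one, ha2] at this
      exact this
  · intro k hk
    have hpk0 : 0 < p ^ k * M := Nat.mul_pos (pow_pos hp.pos k) hM
    constructor
    · intro h
      by_contra hh
      push_neg at hh
      have hbig : M + 2 ≤ p := by omega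
      have hle : p * M + 1 ≤ p ^ k * M := by
        have h1 : p ^ 2 ≤ p ^ k := Nat.pow_le_pow_right hp.pos hk
        have h2 : p ^ 2 * M = p * (p * M) := by ring
        have h3 : 2 * (p * M) ≤ p * (p * M) := Nat.mul_le_mul_right _ hp2
        have h4 : p ^ 2 * M ≤ p ^ k * M := Nat.mul_le_mul_right M h1
        omega
      exact not_rep_two hM hp hcp hk hbig (rep_of_phi hpk0 h (p * M + 1) (by omega) hle)
    · intro hle
      apply phi_of_rep hpk0
      intro m h1 h2
      obtain ⟨a, ha1, ha2⟩ := cover_gen hM hp hle k m h2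
      have := rep_lift hM hp hcp k a (fun j _ => rep_all hM hMphi (a j) (ha1 j))
      rw [ha2] at this
      exact this
end

section
/- Let m be a λ-practical number and p a prime with gcd(p, m) = 1. If p ≤ m + 2, then the number n = pm is λ-practical. Moreover, if k ≥ 2 and p ≤ m + 1, then n = p^k·m is λ-practical. -/
open scoped Classical

open Polynomial

private lemma aux_geom_mul {F : Type*} [Field F] (N k : ℕ) :
    (X ^ N - 1 : F[X]) * (∑ i ∈ Finset.range k, (X ^ N) ^ i) = X ^ (N * k) - 1 := by
  rw [mul_comm, geom_sum_mul, ← pow_mul]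

private lemma aux_coprime_geom {F : Type*} [Field F] {k : ℕ} (N : ℕ) (hk : ((k : ℕ) : F) ≠ 0) :
    IsCoprime (X ^ N - 1 : F[X]) (∑ i ∈ Finset.range k, (X ^ N) ^ i) := by
  have hdvd : (X ^ N - 1 : F[X]) ∣ (∑ i ∈ Finset.range k, (X ^ N) ^ i) - C (k : F) := by
    have h2 : (∑ i ∈ Finset.range k, (X ^ N) ^ i) - C (k : F)
        = ∑ i ∈ Finset.range k, ((X ^ N) ^ i - 1) := by
      rw [Finset.sum_sub_distrib, Finset.sum_const, Finset.card_range]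
      congr 1
      simp [C_eq_natCast]
    rw [h2]
    exact Finset.dvd_sum fun i _ => by
      simpa using sub_dvd_pow_sub_pow (X ^ N : F[X]) 1 i
  obtain ⟨Q, hQ⟩ := hdvd
  have hrw : (∑ i ∈ Finset.range k, (X ^ N) ^ i) = C (k : F) + (X ^ N - 1) * Q := by
    rw [← hQ]; ring
  rw [hrw]
  have hunit : IsCoprime (X ^ N - 1 : F[X]) (C (k : F)) :=
    ⟨0, C (k : F)⁻¹, by rw [zero_mul, zero_add, ← C_mul, inv_mul_cancel₀ hk, C_1]⟩
  exact hunit.add_mul_left_right Q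

private lemma aux_finrank_quot {F : Type*} [Field F] (P g : F[X]) (hP : P ≠ 0) :
    Module.finrank F ((AdjoinRoot P) ⧸ Ideal.span {AdjoinRoot.mk P g}) =
      (EuclideanDomain.gcd g P).natDegree := by
  have hg : EuclideanDomain.gcd g P ≠ 0 := fun h =>
    hP (EuclideanDomain.gcd_eq_zero_iff.mp h).2
  have h1 : Ideal.span {Ideal.Quotient.mk (Ideal.span {P}) g} =
      (Ideal.span {g}).map (Ideal.Quotient.mkₐ F (Ideal.span {P})) := by
    rw [Ideal.map_span, Set.image_singleton]; rfl
  have h2 : Ideal.span ({P} : Set F[X]) ⊔ Ideal.span {g}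
      = Ideal.span ({EuclideanDomain.gcd g P} : Set F[X]) := by
    rw [EuclideanDomain.span_gcd, Ideal.span_insert, sup_comm]
  have e : ((F[X] ⧸ Ideal.span {P}) ⧸ Ideal.span {Ideal.Quotient.mk (Ideal.span {P}) g}) ≃ₐ[F]
      (F[X] ⧸ Ideal.span ({EuclideanDomain.gcd g P} : Set F[X])) :=
    (Ideal.quotientEquivAlgOfEq F h1).trans
      ((DoubleQuot.quotQuotEquivQuotSupₐ F (Ideal.span {P}) (Ideal.span {g})).trans
        (Ideal.quotientEquivAlgOfEq F h2))
  rw [show Module.finrank F ((AdjoinRoot P) ⧸ Ideal.span {AdjoinRoot.mk P g}) = Module.finrank F ((F[X] ⧸ Ideal.span {P}) ⧸ Ideal.span {Ideal.Quotient.mk (Ideal.span {P}) g}) from rfl]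
  rw [e.toLinearEquiv.finrank_eq]
  have := (AdjoinRoot.powerBasis hg).finrank
  rw [AdjoinRoot.powerBasis_dim] at this
  exact this

private lemma aux_gcd_comp_deg {F : Type*} [Field F] {p m : ℕ} (hm : 0 < m) (hp : 0 < p)
    (hcop : Nat.Coprime p m) {u : F[X]} (hu : u ∣ X ^ m - 1) :
    (EuclideanDomain.gcd (u.comp (X ^ p)) (X ^ m - 1)).natDegree = u.natDegree := by
  classical
  set P : F[X] := X ^ m - 1 with hPdef
  have hP0 : P ≠ 0 := by
    have : (X ^ m - C (1 : F)).Monic := monic_X_pow_sub_C (1 : F) hm.ne'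
    simpa [hPdef] using this.ne_zero
  -- find p' and t' with p * p' = t' * m + 1
  obtain ⟨p', t', hpt⟩ : ∃ p' t', p * p' = t' * m + 1 := by
    have h := Nat.ModEq.pow_totient hcop
    have hφ : 1 ≤ Nat.totient m := Nat.totient_pos.mpr hm
    have hple : 1 ≤ p ^ Nat.totient m := Nat.one_le_pow _ _ hp
    have hdvd : m ∣ p ^ Nat.totient m - 1 := (Nat.modEq_iff_dvd' hple).mp h.symm
    obtain ⟨t', ht'⟩ := hdvd
    refine ⟨p ^ (Nat.totient m - 1), t', ?_⟩
    have hps : p * p ^ (Nat.totient m - 1) = p ^ Nat.totient m := by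
      rw [← pow_succ']
      congr 1
      omega
    rw [hps, mul_comm t' m, ← ht']
    omega
  have hroot : (AdjoinRoot.root P) ^ m = 1 := by
    have h0 : aeval (AdjoinRoot.root P) P = 0 := by
      rw [AdjoinRoot.aeval_eq, AdjoinRoot.mk_self]
    rw [hPdef] at h0
    simp only [map_sub, map_pow, aeval_X, map_one] at h0
    linear_combination h0
  have hzero : ∀ c : ℕ, aeval ((AdjoinRoot.root P) ^ c) P = 0 := by
    intro c
    rw [hPdef]
    simp only [map_sub, map_pow, aeval_X, map_one]
    rw [← pow_mul, mul_comm, pow_mul, hroot, one_pow, sub_self]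
  set σ : AdjoinRoot P →ₐ[F] AdjoinRoot P :=
    AdjoinRoot.liftAlgHom P (Algebra.ofId F _) ((AdjoinRoot.root P) ^ p) (by rw [← hzero p, aeval_def]; rfl) with hσdef
  set τ : AdjoinRoot P →ₐ[F] AdjoinRoot P :=
    AdjoinRoot.liftAlgHom P (Algebra.ofId F _) ((AdjoinRoot.root P) ^ p') (by rw [← hzero p', aeval_def]; rfl) with hτdef
  have hrootpp : (AdjoinRoot.root P) ^ (p * p') = AdjoinRoot.root P := by
    rw [hpt, pow_add, pow_one, mul_comm t' m, pow_mul, hroot, one_pow, one_mul]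
  have e1 : σ.comp τ = AlgHom.id F (AdjoinRoot P) := by
    apply AdjoinRoot.algHom_ext
    rw [AlgHom.comp_apply, AlgHom.id_apply, hτdef, hσdef, AdjoinRoot.liftAlgHom_root, map_pow,
      AdjoinRoot.liftAlgHom_root, ← pow_mul]
    exact hrootpp
  have e2 : τ.comp σ = AlgHom.id F (AdjoinRoot P) := by
    apply AdjoinRoot.algHom_ext
    rw [AlgHom.comp_apply, AlgHom.id_apply, hτdef, hσdef, AdjoinRoot.liftAlgHom_root, map_pow,
      AdjoinRoot.liftAlgHom_root, ← pow_mul, mul_comm p' p]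
    exact hrootpp
  set e : AdjoinRoot P ≃ₐ[F] AdjoinRoot P := AlgEquiv.ofAlgHom σ τ e1 e2 with hedef
  have hσmk : e (AdjoinRoot.mk P u) = AdjoinRoot.mk P (u.comp (X ^ p)) := by
    show σ (AdjoinRoot.mk P u) = AdjoinRoot.mk P (u.comp (X ^ p))
    rw [hσdef, AdjoinRoot.liftAlgHom_mk, ← AdjoinRoot.aeval_eq, aeval_comp]
    show aeval _ u = _
    simp only [map_pow, aeval_X]
  have hIJ : Ideal.span {AdjoinRoot.mk P (u.comp (X ^ p))} =
      (Ideal.span {AdjoinRoot.mk P u}).map (e : AdjoinRoot P →+* AdjoinRoot P) := by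
    rw [Ideal.map_span, Set.image_singleton]
    congr 1
    rw [← hσmk]
    rfl
  have hfr := (Ideal.quotientEquivAlg (Ideal.span {AdjoinRoot.mk P u})
    (Ideal.span {AdjoinRoot.mk P (u.comp (X ^ p))}) e hIJ).toLinearEquiv.finrank_eq
  rw [aux_finrank_quot P u hP0, aux_finrank_quot P (u.comp (X ^ p)) hP0] at hfr
  rw [← hfr]
  -- gcd u P has the same degree as u
  have hu0 : u ≠ 0 := by
    rintro rfl
    exact hP0 (zero_dvd_iff.mp hu)
  have hgcd0 : EuclideanDomain.gcd u P ≠ 0 := fun h =>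
    hP0 (EuclideanDomain.gcd_eq_zero_iff.mp h).2
  have hd1 : EuclideanDomain.gcd u P ∣ u := EuclideanDomain.gcd_dvd_left u P
  have hd2 : u ∣ EuclideanDomain.gcd u P := EuclideanDomain.dvd_gcd dvd_rfl hu
  exact Nat.le_antisymm (natDegree_le_of_dvd hd1 hu0) (natDegree_le_of_dvd hd2 hgcd0)

private lemma aux_Xpow_ne {F : Type*} [Field F] {N : ℕ} (hN : 0 < N) :
    (X ^ N - 1 : F[X]) ≠ 0 := by
  have : (X ^ N - C (1 : F)).Monic := monic_X_pow_sub_C (1 : F) hN.ne'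
  simpa using this.ne_zero

private lemma aux_divisor_geom {F : Type*} [Field F] {p m : ℕ} (hm : 0 < m) (hp : 0 < p)
    (hcop : Nat.Coprime p m) (hpF : ((p : ℕ) : F) ≠ 0)
    {u : F[X]} (hu : u ∣ X ^ m - 1) :
    ∃ g : F[X], g ∣ (∑ i ∈ Finset.range p, ((X : F[X]) ^ m) ^ i) ∧
      g.natDegree + u.natDegree = u.natDegree * p := by
  classical
  have hmp : 0 < m * p := Nat.mul_pos hm hp
  have hbig0 : (X ^ (m * p) - 1 : F[X]) ≠ 0 := aux_Xpow_ne hmp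
  have hcompP : (X ^ m - 1 : F[X]).comp (X ^ p) = X ^ (m * p) - 1 := by
    simp only [sub_comp, X_pow_comp, one_comp, ← pow_mul]
    rw [mul_comm p m]
  have hw : u.comp (X ^ p) ∣ (X ^ (m * p) - 1 : F[X]) := by
    obtain ⟨c, hc⟩ := hu
    exact ⟨c.comp (X ^ p), by rw [← hcompP, hc, mul_comp]⟩
  have hw2 : u.comp (X ^ p) ∣
      (X ^ m - 1 : F[X]) * (∑ i ∈ Finset.range p, ((X : F[X]) ^ m) ^ i) := by
    rw [aux_geom_mul]; exact hw
  obtain ⟨g1, g2, hg1, hg2, hsplit⟩ := exists_dvd_and_dvd_of_dvd_mul hw2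
  have hco : IsCoprime (X ^ m - 1 : F[X]) (∑ i ∈ Finset.range p, ((X : F[X]) ^ m) ^ i) :=
    aux_coprime_geom m hpF
  -- g1 is associated to the gcd
  set d := EuclideanDomain.gcd (u.comp (X ^ p)) (X ^ m - 1) with hddef
  have hg1d : g1 ∣ d := EuclideanDomain.dvd_gcd ⟨g2, hsplit⟩ hg1
  have hdg1 : d ∣ g1 := by
    have hdP : d ∣ (X ^ m - 1 : F[X]) := EuclideanDomain.gcd_dvd_right _ _
    have hcod : IsCoprime d g2 :=
      (hco.of_isCoprime_of_dvd_left hdP).of_isCoprime_of_dvd_right hg2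
    have : d ∣ g1 * g2 := by rw [← hsplit]; exact EuclideanDomain.gcd_dvd_left _ _
    exact hcod.dvd_of_dvd_mul_right this
  have hw0 : u.comp (X ^ p) ≠ 0 := by
    rintro h
    rw [h] at hw
    exact hbig0 (zero_dvd_iff.mp hw)
  have hg10 : g1 ≠ 0 := fun h => hw0 (by rw [hsplit, h, zero_mul])
  have hg20 : g2 ≠ 0 := fun h => hw0 (by rw [hsplit, h, mul_zero])
  have hd0 : d ≠ 0 := by
    rintro h
    rw [h] at hdg1
    exact hg10 (zero_dvd_iff.mp hdg1)
  have hg1deg : g1.natDegree = u.natDegree := by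
    rw [← aux_gcd_comp_deg hm hp hcop hu, ← hddef]
    exact Nat.le_antisymm (natDegree_le_of_dvd hg1d hd0) (natDegree_le_of_dvd hdg1 hg10)
  refine ⟨g2, hg2, ?_⟩
  have hdegs : u.natDegree * p = g1.natDegree + g2.natDegree := by
    have h1 : (u.comp (X ^ p)).natDegree = u.natDegree * p := by
      rw [natDegree_comp, natDegree_X_pow]
    rw [← h1, hsplit, natDegree_mul hg10 hg20]
  omega

private lemma aux_mul_sub_one (s p : ℕ) (hp : 1 ≤ p) : s * (p - 1) + s = s * p := by
  obtain ⟨n, rfl⟩ := Nat.exists_eq_add_of_le hp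
  have h : 1 + n - 1 = n := by omega
  rw [h, Nat.mul_add, mul_one]
  omega

private lemma aux_step {F : Type*} [Field F] {p m : ℕ} (hm : 0 < m) (hp : 0 < p)
    (hcop : Nat.Coprime p m) (hpF : ((p : ℕ) : F) ≠ 0)
    (hbase : ∀ s, s ≤ m → ∃ u : F[X], u ∣ X ^ m - 1 ∧ u.natDegree = s)
    (d : ℕ) (hd : 0 < d)
    (hfull : ∀ t, t ≤ d * m → ∃ W : F[X], W ∣ X ^ (d * m) - 1 ∧ W.natDegree = t)
    (t s : ℕ) (hs : s ≤ m) (h1 : s * (p - 1) * d ≤ t) (h2 : t - s * (p - 1) * d ≤ d * m) :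
    ∃ W : F[X], W ∣ X ^ (d * m * p) - 1 ∧ W.natDegree = t := by
  classical
  obtain ⟨u, hu, hus⟩ := hbase s hs
  obtain ⟨g, hg, hgdeg⟩ := aux_divisor_geom hm hp hcop hpF hu
  obtain ⟨W', hW', hW'deg⟩ := hfull _ h2
  have hdm : 0 < d * m := Nat.mul_pos hd hm
  have hbig0 : (X ^ (d * m * p) - 1 : F[X]) ≠ 0 := aux_Xpow_ne (Nat.mul_pos hdm hp)
  -- the geometric sum at level d*m
  set H : F[X] := ∑ i ∈ Finset.range p, ((X : F[X]) ^ (d * m)) ^ i with hHdef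
  have hHmul : (X ^ (d * m) - 1 : F[X]) * H = X ^ (d * m * p) - 1 := aux_geom_mul (d * m) p
  have hH0 : H ≠ 0 := right_ne_zero_of_mul (hHmul.symm ▸ hbig0)
  -- g.comp (X ^ d) divides H
  have hHcomp : (∑ i ∈ Finset.range p, ((X : F[X]) ^ m) ^ i).comp (X ^ d) = H := by
    rw [hHdef]
    simp only [sum_comp, pow_comp, X_comp, ← pow_mul, mul_assoc]
  have hgc : g.comp (X ^ d) ∣ H := by
    obtain ⟨c, hc⟩ := hg
    exact ⟨c.comp (X ^ d), by rw [← hHcomp, hc, mul_comp]⟩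
  have hgc0 : g.comp (X ^ d) ≠ 0 := by
    rintro h
    rw [h] at hgc
    exact hH0 (zero_dvd_iff.mp hgc)
  have hW'0 : W' ≠ 0 := by
    rintro rfl
    exact aux_Xpow_ne hdm (zero_dvd_iff.mp hW')
  have hco : IsCoprime (X ^ (d * m) - 1 : F[X]) H := aux_coprime_geom (d * m) hpF
  have hcoW : IsCoprime W' (g.comp (X ^ d)) :=
    (hco.of_isCoprime_of_dvd_left hW').of_isCoprime_of_dvd_right hgc
  refine ⟨W' * g.comp (X ^ d), ?_, ?_⟩
  · refine hcoW.mul_dvd (hW'.trans ⟨H, hHmul.symm⟩) (hgc.trans ⟨X ^ (d * m) - 1, ?_⟩)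
    rw [← hHmul]; ring
  · rw [natDegree_mul hW'0 hgc0, hW'deg, natDegree_comp, natDegree_X_pow]
    have hgd : g.natDegree = s * (p - 1) := by
      rw [hus] at hgdeg
      have := aux_mul_sub_one s p hp
      omega
    rw [hgd]
    omega

private lemma aux_char_case {p m : ℕ} (hp : p.Prime) (hm : 0 < m)
    (hbase : PPractical p m) (K : ℕ) : PPractical p (p ^ K * m) := by
  haveI := Fact.mk hp
  intro t ht1 ht2
  have hfact : (X ^ (p ^ K * m) - 1 : (ZMod p)[X]) = (X ^ m - 1) ^ (p ^ K) := by
    have h1 : (X ^ (p ^ K * m) : (ZMod p)[X]) = (X ^ m) ^ (p ^ K) := by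
      rw [← pow_mul, mul_comm]
    rw [h1, sub_pow_char_pow, one_pow]
  obtain ⟨j, r, htjr, hr1, hrm⟩ : ∃ j r, j * m + r = t ∧ 1 ≤ r ∧ r ≤ m := by
    refine ⟨(t - 1) / m, (t - 1) % m + 1, ?_, Nat.le_add_left 1 _,
      Nat.succ_le_of_lt (Nat.mod_lt _ hm)⟩
    have hdm := Nat.div_add_mod (t - 1) m
    have hcm : (t - 1) / m * m = m * ((t - 1) / m) := Nat.mul_comm _ _
    omega
  have hjK : j + 1 ≤ p ^ K := by
    have hb : p ^ K * m = m * p ^ K := Nat.mul_comm _ _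
    have hcm : j * m = m * j := Nat.mul_comm _ _
    have h2 : m * j < m * p ^ K := by omega
    exact Nat.succ_le_of_lt (Nat.lt_of_mul_lt_mul_left h2)
  obtain ⟨u, hu, hur⟩ := hbase r hr1 hrm
  have hu0 : u ≠ 0 := by
    rintro rfl
    exact aux_Xpow_ne hm (zero_dvd_iff.mp hu)
  refine ⟨(X ^ m - 1) ^ j * u, ?_, ?_⟩
  · rw [hfact]
    calc (X ^ m - 1 : (ZMod p)[X]) ^ j * u ∣ (X ^ m - 1) ^ j * (X ^ m - 1) :=
          mul_dvd_mul_left _ hu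
      _ = (X ^ m - 1) ^ (j + 1) := by rw [pow_succ]
      _ ∣ (X ^ m - 1) ^ (p ^ K) := pow_dvd_pow _ hjK
  · rw [natDegree_mul (pow_ne_zero _ (aux_Xpow_ne hm)) hu0, natDegree_pow, hur]
    have : (X ^ m - 1 : (ZMod p)[X]).natDegree = m := by
      simpa using natDegree_X_pow_sub_C (n := m) (r := (1 : ZMod p))
    rw [this]
    omega

private lemma aux_num1 {p m t : ℕ} (hp2 : 2 ≤ p) (hpm : p ≤ m + 2) (ht : t ≤ m * p) :
    ∃ s, s ≤ m ∧ s * (p - 1) ≤ t ∧ t - s * (p - 1) ≤ m := by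
  have hp1 : 0 < p - 1 := by omega
  have hms : m * (p - 1) + m = m * p := aux_mul_sub_one m p (by omega)
  rcases le_or_gt m (t / (p - 1)) with h | h
  · refine ⟨m, le_rfl, ?_, ?_⟩
    · have := (Nat.le_div_iff_mul_le hp1).mp h
      omega
    · omega
  · refine ⟨t / (p - 1), h.le, Nat.div_mul_le_self t (p - 1), ?_⟩
    have h1 := Nat.div_add_mod t (p - 1)
    have h2 : t % (p - 1) < p - 1 := Nat.mod_lt _ hp1
    have h3 : t / (p - 1) * (p - 1) = (p - 1) * (t / (p - 1)) := Nat.mul_comm _ _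
    omega

private lemma aux_num2 {p m d t : ℕ} (hp2 : 2 ≤ p) (hpm : p ≤ m + 1) (hd : 0 < d)
    (ht : t ≤ d * m * p) :
    ∃ s, s ≤ m ∧ s * (p - 1) * d ≤ t ∧ t - s * (p - 1) * d ≤ d * m := by
  have hp1 : 0 < p - 1 := by omega
  set D := (p - 1) * d with hDdef
  have hD : 0 < D := Nat.mul_pos hp1 hd
  have hms : m * (p - 1) * d + d * m = d * m * p := by
    have base := aux_mul_sub_one m p (by omega)
    calc m * (p - 1) * d + d * m = (m * (p - 1) + m) * d := by ring
      _ = m * p * d := by rw [base]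
      _ = d * m * p := by ring
  rcases le_or_gt m (t / D) with h | h
  · refine ⟨m, le_rfl, ?_, ?_⟩
    · have := (Nat.le_div_iff_mul_le hD).mp h
      have hc : m * D = m * (p - 1) * d := by rw [hDdef]; ring
      omega
    · omega
  · refine ⟨t / D, h.le, ?_, ?_⟩
    · have h0 := Nat.div_mul_le_self t D
      have hc : t / D * D = t / D * (p - 1) * d := by rw [hDdef]; ring
      omega
    · have h1 := Nat.div_add_mod t D
      have h2 : t % D < D := Nat.mod_lt _ hD
      have h3 : D ≤ m * d := by
        have : p - 1 ≤ m := by omega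
        rw [hDdef]
        exact Nat.mul_le_mul_right d this
      have hc : t / D * (p - 1) * d = D * (t / D) := by rw [hDdef]; ring
      have hc2 : m * d = d * m := Nat.mul_comm _ _
      omega

theorem stmt10 (m p : ℕ) (hm : 0 < m) (hml : LambdaPractical m) (hp : p.Prime)
    (hcop : Nat.gcd p m = 1) :
    (p ≤ m + 2 → LambdaPractical (p * m)) ∧
    (∀ k : ℕ, 2 ≤ k → p ≤ m + 1 → LambdaPractical (p ^ k * m)) := by
  have hcop' : Nat.Coprime p m := hcop
  have hp2 : 2 ≤ p := hp.two_le
  have hp0 : 0 < p := by omega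
  -- For any prime q different from p, a base divisor family over ZMod q
  have key : ∀ q : ℕ, q.Prime → q ≠ p →
      (∀ s, s ≤ m → ∃ u : (ZMod q)[X], u ∣ X ^ m - 1 ∧ u.natDegree = s) := by
    intro q hq hqp s hs
    rcases Nat.eq_zero_or_pos s with rfl | hs1
    · exact ⟨1, one_dvd _, natDegree_one⟩
    · exact hml q hq s hs1 hs
  have hpF : ∀ q : ℕ, q.Prime → q ≠ p → ((p : ℕ) : ZMod q) ≠ 0 := by
    intro q hq hqp
    haveI : NeZero q := ⟨hq.pos.ne'⟩
    rw [Ne, ZMod.natCast_eq_zero_iff]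
    intro hdvd
    exact hqp ((Nat.prime_dvd_prime_iff_eq hq hp).mp hdvd)
  constructor
  · -- part 1
    intro hpm2 q hq
    by_cases hqp : q = p
    · subst hqp
      have := aux_char_case hq hm (hml q hq) 1
      rwa [pow_one] at this
    · haveI := Fact.mk hq
      intro t ht1 ht2
      obtain ⟨s, hs, h1, h2⟩ := aux_num1 hp2 hpm2 (t := t) (by rw [mul_comm]; exact ht2)
      have hfull : ∀ t', t' ≤ 1 * m →
          ∃ W : (ZMod q)[X], W ∣ X ^ (1 * m) - 1 ∧ W.natDegree = t' := by
        intro t' ht'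
        rw [one_mul] at ht' ⊢
        exact key q hq hqp t' ht'
      obtain ⟨W, hW, hWdeg⟩ := aux_step (F := ZMod q) hm hp0 hcop' (hpF q hq hqp) (key q hq hqp) 1
        Nat.one_pos hfull t s hs (by simpa using h1) (by simpa using h2)
      rw [show 1 * m * p = p * m by ring] at hW
      exact ⟨W, hW, hWdeg⟩
  · -- part 2
    intro k hk2 hpm1 q hq
    by_cases hqp : q = p
    · subst hqp
      exact aux_char_case hq hm (hml q hq) k
    · haveI := Fact.mk hq
      have full : ∀ j : ℕ, ∀ t, t ≤ p ^ j * m →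
          ∃ W : (ZMod q)[X], W ∣ X ^ (p ^ j * m) - 1 ∧ W.natDegree = t := by
        intro j
        induction j with
        | zero =>
          intro t ht
          rw [pow_zero, one_mul] at ht ⊢
          exact key q hq hqp t ht
        | succ j ih =>
          intro t ht
          have htt : t ≤ p ^ j * m * p := by
            rw [show p ^ j * m * p = p ^ (j + 1) * m by rw [pow_succ]; ring]
            exact ht
          obtain ⟨s, hs, h1, h2⟩ := aux_num2 hp2 hpm1 (d := p ^ j) (pow_pos hp0 j) htt
          have h1' : s * (p - 1) * p ^ j ≤ t := by
            rw [show s * (p - 1) * p ^ j = s * (p - 1) * p ^ j from rfl]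
            exact h1
          obtain ⟨W, hW, hWdeg⟩ := aux_step (F := ZMod q) hm hp0 hcop' (hpF q hq hqp) (key q hq hqp)
            (p ^ j) (pow_pos hp0 j) ih t s hs h1 h2
          rw [show p ^ j * m * p = p ^ (j + 1) * m by rw [pow_succ]; ring] at hW
          exact ⟨W, hW, hWdeg⟩
      intro t ht1 ht2
      exact full k t ht2
end

section
/- Let n be an even positive integer. Then the following are equivalent: n is weakly φ-practical; n is φ-practical; n is λ-practical. -/
open scoped Classical

def Good (n : ℕ) : Prop :=
  ∀ m : ℕ, m ≤ n → ∃ S : Finset ℕ, S ⊆ n.divisors ∧ ∑ d ∈ S, Nat.totient d = m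

theorem good_one : Good 1 := by
  intro m hm
  interval_cases m
  · exact ⟨∅, by simp⟩
  · exact ⟨{1}, by simp⟩

theorem good_mul_prime_pow {n q : ℕ} (hn : 0 < n) (hG : Good n) (hq : q.Prime)
    (hqn : ¬ q ∣ n) (hle : q ≤ n + 1) : ∀ e : ℕ, Good (n * q ^ e) := by
  intro e
  induction e with
  | zero => simpa using hG
  | succ e IH =>
    intro m hm
    have hq1 : 1 ≤ q := hq.one_lt.le
    have hK : 0 < (q - 1) * q ^ e := by
      have := hq.one_lt
      have := Nat.pow_pos (n := e) hq.pos
      exact Nat.mul_pos (by omega) (by positivity)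
    set K := (q - 1) * q ^ e with hKdef
    -- find s ≤ n, r ≤ n * q ^ e with m = r + s * K
    obtain ⟨s, r, hs, hr, hsr⟩ : ∃ s r : ℕ, s ≤ n ∧ r ≤ n * q ^ e ∧ m = r + s * K := by
      have hqe : n * (q - 1) * q ^ e + n * q ^ e = n * q ^ (e+1) := by
        have h1 : (q - 1) + 1 = q := by omega
        calc n * (q - 1) * q ^ e + n * q ^ e = n * ((q - 1) + 1) * q ^ e := by ring
          _ = n * q ^ (e + 1) := by rw [h1]; ring
      by_cases hcase : m / K ≤ n
      · refine ⟨m / K, m % K, hcase, ?_, by rw [Nat.mod_add_div' m K]⟩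
        have h2 : m % K < K := Nat.mod_lt _ hK
        have h3 : K ≤ n * q ^ e := by
          rw [hKdef]
          exact Nat.mul_le_mul_right _ (by omega)
        omega
      · push_neg at hcase
        have h4 : n * K ≤ m := by
          calc n * K ≤ (m / K) * K := Nat.mul_le_mul_right _ (by omega)
            _ ≤ m := Nat.div_mul_le_self m K
        refine ⟨n, m - n * K, le_refl n, ?_, by omega⟩
        have : n * K = n * (q-1) * q ^ e := by rw [hKdef]; ring
        omega
    obtain ⟨S1, hS1sub, hS1sum⟩ := hG s hs
    obtain ⟨S2, hS2sub, hS2sum⟩ := IH r hr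
    have hqpow : (0:ℕ) < q ^ (e+1) := Nat.pow_pos hq.pos
    refine ⟨(S1.image (· * q ^ (e+1))) ∪ S2, ?_, ?_⟩
    · intro x hx
      rcases Finset.mem_union.mp hx with hx | hx
      · obtain ⟨d, hd, rfl⟩ := Finset.mem_image.mp hx
        have hdn : d ∣ n := (Nat.mem_divisors.mp (hS1sub hd)).1
        exact Nat.mem_divisors.mpr ⟨mul_dvd_mul hdn dvd_rfl,
          by positivity⟩
      · have := (Nat.mem_divisors.mp (hS2sub hx)).1
        exact Nat.mem_divisors.mpr ⟨this.trans (mul_dvd_mul_left n (pow_dvd_pow q (by omega))),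
          by positivity⟩
    · have hdisj : Disjoint (S1.image (· * q ^ (e+1))) S2 := by
        rw [Finset.disjoint_left]
        rintro x hx1 hx2
        obtain ⟨d, hd, rfl⟩ := Finset.mem_image.mp hx1
        have hdvd : d * q ^ (e+1) ∣ n * q ^ e := (Nat.mem_divisors.mp (hS2sub hx2)).1
        have hq2 : q ^ (e+1) ∣ n * q ^ e := dvd_trans (dvd_mul_left _ d) hdvd
        have hcop : Nat.Coprime (q ^ (e+1)) n :=
          (Nat.Prime.coprime_iff_not_dvd hq).mpr hqn |>.pow_left _
        have := (Nat.Coprime.dvd_of_dvd_mul_left hcop hq2)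
        have := Nat.le_of_dvd (by positivity) this
        have : q ^ e < q ^ (e+1) := Nat.pow_lt_pow_succ hq.one_lt
        omega
      rw [Finset.sum_union hdisj, Finset.sum_image (by
        intro a _ b _ hab
        exact Nat.eq_of_mul_eq_mul_right hqpow hab)]
      have hphi : ∀ d ∈ S1, Nat.totient (d * q ^ (e+1)) = Nat.totient d * K := by
        intro d hd
        have hdn : d ∣ n := (Nat.mem_divisors.mp (hS1sub hd)).1
        have hcop : Nat.Coprime d (q ^ (e+1)) := by
          apply Nat.Coprime.pow_right
          exact ((Nat.Prime.coprime_iff_not_dvd hq).mpr (fun h => hqn (h.trans hdn))).symm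
        rw [Nat.totient_mul hcop, Nat.totient_prime_pow hq (by omega), Nat.add_sub_cancel, hKdef]
        ring
      rw [Finset.sum_congr rfl hphi, ← Finset.sum_mul, hS1sum, hS2sum]
      omega

theorem wpp_good : ∀ n : ℕ, 0 < n → (n = 1 ∨ (2 ∣ n ∧ WeaklyPhiPractical n)) → Good n := by
  intro n
  induction n using Nat.strong_induction_on with
  | _ n IH =>
    rintro hn0 (rfl | ⟨heven, hnpos, hwpp⟩)
    · exact good_one
    · have hn2 : 2 ≤ n := (Nat.prime_two).two_le.trans (Nat.le_of_dvd hn0 heven)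
      have hne : n.primeFactors.Nonempty := by
        refine ⟨2, Nat.mem_primeFactors.mpr ⟨Nat.prime_two, heven, by omega⟩⟩
      set q := n.primeFactors.max' hne with hqdef
      have hqmem : q ∈ n.primeFactors := n.primeFactors.max'_mem hne
      obtain ⟨hqprime, hqdvd, -⟩ := Nat.mem_primeFactors.mp hqmem
      have hqmax : ∀ r ∈ n.primeFactors, r ≤ q := fun r hr => Finset.le_max' _ r hr
      set e := n.factorization q with hedef
      have he1 : 1 ≤ e := hqprime.factorization_pos_of_dvd (by omega) hqdvd
      set m := ordCompl[q] n with hmdef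
      have hmn : ordProj[q] n * m = n := Nat.ordProj_mul_ordCompl_eq_self n q
      have hm0 : 0 < m := Nat.ordCompl_pos q (by omega)
      have hqm : ¬ q ∣ m := Nat.not_dvd_ordCompl hqprime (by omega)
      have hmlt : m < n := by
        have h1 : q ^ e > 1 := Nat.one_lt_pow (by omega) hqprime.one_lt
        nlinarith [hm0, hmn]
      have hfact : m.factorization = n.factorization.erase q := Nat.factorization_ordCompl n q
      have hmpf : m.primeFactors = n.primeFactors.erase q := by
        rw [← Nat.support_factorization, hfact, Finsupp.support_erase, Nat.support_factorization]
      -- the product in WPP for q equals m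
      have hprodm : (∏ r ∈ n.primeFactors.filter (· < q), r ^ n.factorization r) = m := by
        have hfilter : n.primeFactors.filter (· < q) = n.primeFactors.erase q := by
          ext r
          simp only [Finset.mem_filter, Finset.mem_erase]
          constructor
          · rintro ⟨h1, h2⟩; exact ⟨by omega, h1⟩
          · rintro ⟨h1, h2⟩; exact ⟨h2, lt_of_le_of_ne (hqmax r h2) h1⟩
        rw [hfilter]
        have hn' : n = ∏ r ∈ n.primeFactors, r ^ n.factorization r := by
          conv_lhs => rw [← Nat.factorization_prod_pow_eq_self (show n ≠ 0 by omega)]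
          rfl
        have hsplit : ∏ r ∈ n.primeFactors, r ^ n.factorization r
            = (∏ r ∈ n.primeFactors \ {q}, r ^ n.factorization r) * q ^ e :=
          Finset.prod_eq_prod_diff_singleton_mul hqmem _
        have hqe : 0 < q ^ e := Nat.pow_pos hqprime.pos
        have : (∏ r ∈ n.primeFactors \ {q}, r ^ n.factorization r) * q ^ e = m * q ^ e := by
          rw [← hsplit, ← hn', ← hmn]; ring
        have := Nat.eq_of_mul_eq_mul_right hqe this
        rw [← Finset.erase_eq] at this
        exact this
      have hqle : q ≤ m + 2 := by
        have := hwpp q hqprime hqdvd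
        omega
      rcases eq_or_ne q 2 with hq2 | hq2
      · -- n is a power of 2, m = 1
        have hm1 : m = 1 := by
          by_contra hm1
          obtain ⟨r, hrprime, hrdvd⟩ := Nat.exists_prime_and_dvd hm1
          have hrm : r ∈ m.primeFactors := Nat.mem_primeFactors.mpr ⟨hrprime, hrdvd, by omega⟩
          rw [hmpf, Finset.mem_erase] at hrm
          have := hqmax r hrm.2
          have := hrprime.two_le
          omega
        have := good_mul_prime_pow (n := 1) one_pos good_one hqprime (by simpa using hqprime.one_lt.ne')
          (by omega) e
        rw [show (1 : ℕ) * q ^ e = n by rw [one_mul, ← hmn, hm1, mul_one]] at this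
        exact this
      · -- q odd, m even
        have hqodd : ¬ 2 ∣ q := by
          intro h
          exact hq2 ((Nat.prime_dvd_prime_iff_eq Nat.prime_two hqprime).mp h).symm
        have h2m : 2 ∣ m := by
          have h2mem : 2 ∈ m.primeFactors := by
            rw [hmpf, Finset.mem_erase]
            exact ⟨by omega, Nat.mem_primeFactors.mpr ⟨Nat.prime_two, heven, by omega⟩⟩
          exact Nat.dvd_of_mem_primeFactors h2mem
        -- q ≤ m + 1 by parity
        have hqle1 : q ≤ m + 1 := by
          rcases eq_or_ne q (m + 2) with h | h
          · exfalso; apply hqodd; omega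
          · omega
        -- m is weakly φ-practical
        have hwppm : WeaklyPhiPractical m := by
          refine ⟨hm0, fun r hrprime hrdvd => ?_⟩
          have hrm : r ∈ m.primeFactors := Nat.mem_primeFactors.mpr ⟨hrprime, hrdvd, by omega⟩
          have hrq : r < q := by
            rw [hmpf, Finset.mem_erase] at hrm
            exact lt_of_le_of_ne (hqmax r hrm.2) hrm.1
          have heq : ∏ s ∈ m.primeFactors.filter (· < r), s ^ m.factorization s
              = ∏ s ∈ n.primeFactors.filter (· < r), s ^ n.factorization s := by
            have hsets : m.primeFactors.filter (· < r) = n.primeFactors.filter (· < r) := by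
              rw [hmpf]
              ext s
              simp only [Finset.mem_filter, Finset.mem_erase]
              constructor
              · rintro ⟨⟨h1, h2⟩, h3⟩; exact ⟨h2, h3⟩
              · rintro ⟨h1, h2⟩; exact ⟨⟨by omega, h1⟩, h2⟩
            rw [hsets]
            apply Finset.prod_congr rfl
            intro s hs
            simp only [Finset.mem_filter] at hs
            have : s ≠ q := by omega
            rw [hfact, Finsupp.erase_ne this]
          rw [heq]
          exact hwpp r hrprime (hrdvd.trans (Nat.ordCompl_dvd n q))
        have hGm : Good m := IH m hmlt hm0 (Or.inr ⟨h2m, hwppm⟩)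
        have := good_mul_prime_pow hm0 hGm hqprime hqm hqle1 e
        rw [show m * q ^ e = n by rw [← hmn]; ring] at this
        exact this


open Polynomial

theorem good_phiPractical {n : ℕ} (hn : 0 < n) (h : Good n) : PhiPractical n := by
  intro m _ hm
  obtain ⟨S, hS, hsum⟩ := h m hm
  refine ⟨∏ d ∈ S, cyclotomic d ℤ, ?_, ?_⟩
  · rw [← prod_cyclotomic_eq_X_pow_sub_one hn ℤ]
    exact Finset.prod_dvd_prod_of_subset S _ _ hS
  · rw [natDegree_prod _ _ fun d _ => cyclotomic_ne_zero d ℤ]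
    simp only [natDegree_cyclotomic]
    exact hsum

theorem phi_imp_lambda {n : ℕ} (h : PhiPractical n) : LambdaPractical n := by
  intro p hp m h1 hm
  obtain ⟨g, hdvd, hdeg⟩ := h m h1 hm
  haveI := Fact.mk hp
  have hn1 : 1 ≤ n := le_trans h1 hm
  have hmonic : (X ^ n - 1 : Polynomial ℤ).Monic := by
    simpa using monic_X_pow_sub_C (1 : ℤ) (by omega : n ≠ 0)
  refine ⟨g.map (Int.castRingHom (ZMod p)),
    by simpa using Polynomial.map_dvd (Int.castRingHom (ZMod p)) hdvd, ?_⟩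
  rw [← hdeg]
  apply natDegree_map_of_leadingCoeff_ne_zero
  obtain ⟨c, hc⟩ := hdvd
  have hu : IsUnit g.leadingCoeff := by
    apply IsUnit.of_mul_eq_one c.leadingCoeff
    rw [← leadingCoeff_mul, ← hc]
    exact hmonic
  exact (hu.map (Int.castRingHom (ZMod p))).ne_zero


theorem exists_primroot_mod (s : ℕ) (hs : s.Prime) : ∃ a : ZMod s, IsUnit a ∧ orderOf a = s - 1 := by
  haveI := Fact.mk hs
  obtain ⟨g, hg⟩ := IsCyclic.exists_generator (α := (ZMod s)ˣ)
  refine ⟨g, g.isUnit, ?_⟩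
  rw [orderOf_units, orderOf_eq_card_of_forall_mem_zpowers hg, Nat.card_eq_fintype_card,
    ZMod.card_units s]

theorem exists_simultaneous_primroot (T : Finset ℕ) (hT : ∀ s ∈ T, s.Prime)
    (N : ℕ) : ∃ p : ℕ, p.Prime ∧ N < p ∧ ∀ s ∈ T, orderOf ((p : ZMod s)) = s - 1 := by
  classical
  set M : ℕ := ∏ i : {x // x ∈ T}, (i : ℕ) with hMdef
  have hcop : Pairwise (Function.onFun Nat.Coprime fun i : {x // x ∈ T} => (i : ℕ)) := by
    intro i j hij
    have : (i : ℕ) ≠ (j : ℕ) := fun h => hij (Subtype.ext h)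
    exact (Nat.coprime_primes (hT i i.2) (hT j j.2)).mpr this
  have hM0 : M ≠ 0 := by
    rw [hMdef]
    exact Finset.prod_ne_zero_iff.mpr fun i _ => (hT i i.2).pos.ne'
  haveI : NeZero M := ⟨hM0⟩
  let equiv := ZMod.prodEquivPi (fun i : {x // x ∈ T} => (i : ℕ)) hcop
  choose a ha1 ha2 using fun i : {x // x ∈ T} => exists_primroot_mod i (hT i i.2)
  set x : ZMod M := equiv.symm a with hx
  have hxu : IsUnit x := by
    have : IsUnit a := by
      refine isUnit_iff_exists_inv.mpr ⟨fun i => ((ha1 i).unit⁻¹ : (ZMod (i : ℕ))ˣ), ?_⟩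
      funext i
      show a i * _ = 1
      exact (ha1 i).mul_val_inv
    exact this.map equiv.symm.toRingHom
  obtain ⟨p, hpN, hp, hpx⟩ := Nat.forall_exists_prime_gt_and_eq_mod hxu N
  refine ⟨p, hp, hpN, fun s hs => ?_⟩
  have hcast : (p : ZMod s) = a ⟨s, hs⟩ := by
    have h1 : equiv ((p : ZMod M)) = fun i : {x // x ∈ T} => (p : ZMod (i : ℕ)) := by
      exact map_natCast equiv p
    have h2 : equiv x = a := equiv.apply_symm_apply a
    rw [hpx, h2] at h1
    exact (congrFun h1 ⟨s, hs⟩).symm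
  rw [hcast]
  exact ha2 ⟨s, hs⟩


theorem order_dvd_of_irred_factor {p n : ℕ} (hp : p.Prime) (hn : 0 < n)
    {h : Polynomial (ZMod p)} (hirr : Irreducible h) (hmonic : h.Monic)
    (hdvd : h ∣ X ^ n - 1) :
    ∃ d : ℕ, 0 < d ∧ d ∣ n ∧ d ∣ p ^ h.natDegree - 1 ∧
      ∀ m : ℕ, d ∣ m → h ∣ X ^ m - 1 := by
  haveI := Fact.mk hp
  haveI := Fact.mk hirr
  set K := AdjoinRoot h with hK
  set α : K := AdjoinRoot.root h with hα
  have hmk : ∀ k : ℕ, (AdjoinRoot.mk h (X ^ k - 1) = 0) ↔ (α ^ k = 1) := by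
    intro k
    rw [map_sub, map_pow, map_one, AdjoinRoot.mk_X, sub_eq_zero]
  have hαn : α ^ n = 1 := (hmk n).mp (AdjoinRoot.mk_eq_zero.mpr hdvd)
  set d := orderOf α with hd
  have hdn : d ∣ n := orderOf_dvd_of_pow_eq_one hαn
  have hd0 : 0 < d := Nat.pos_of_dvd_of_pos hdn hn
  refine ⟨d, hd0, hdn, ?_, ?_⟩
  · -- d ∣ p ^ natDegree h - 1
    have hα0 : α ≠ 0 := by
      intro h0
      rw [h0, zero_pow (by omega : n ≠ 0)] at hαn
      exact zero_ne_one hαn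
    let pb := AdjoinRoot.powerBasis' hmonic
    have hdim : pb.dim = h.natDegree := AdjoinRoot.powerBasis'_dim hmonic
    haveI : Finite K := by
      have e := pb.basis.equivFun
      exact Finite.of_equiv _ e.toEquiv.symm
    have hcard : Nat.card K = p ^ h.natDegree := by
      rw [Nat.card_congr pb.basis.equivFun.toEquiv, Nat.card_fun, Nat.card_zmod,
        Nat.card_eq_fintype_card, Fintype.card_fin, hdim]
    have hcardu : Nat.card Kˣ = p ^ h.natDegree - 1 := by
      rw [Nat.card_units, hcard]
    set u : Kˣ := Units.mk0 α hα0 with hu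
    have : orderOf u = d := by rw [hd, ← orderOf_units]; rfl
    rw [← hcardu, ← this]
    exact orderOf_dvd_natCard u
  · intro m hdm
    have : α ^ m = 1 := orderOf_dvd_iff_pow_eq_one.mp hdm
    exact AdjoinRoot.mk_eq_zero.mp ((hmk m).mpr this)

theorem m_facts {n q : ℕ} (hn : 0 < n) (hq : q.Prime) :
    let F := n.primeFactors.filter (· < q)
    let m := ∏ r ∈ F, r ^ n.factorization r
    0 < m ∧ m ∣ n ∧ ¬ q ∣ m ∧
      (∀ d : ℕ, d ∣ n → ¬ d ∣ m → ∃ s : ℕ, s.Prime ∧ s ∣ d ∧ q ≤ s) := by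
  intro F m
  have hFsub : F ⊆ n.primeFactors := Finset.filter_subset _ _
  have hFprime : ∀ r ∈ F, r.Prime := fun r hr => Nat.prime_of_mem_primeFactors (hFsub hr)
  have hm0 : 0 < m := Finset.prod_pos fun r hr => Nat.pow_pos (hFprime r hr).pos
  have hfmval : ∀ s : ℕ, m.factorization s = if s ∈ F then n.factorization s else 0 := by
    intro s
    have h1 : m.factorization = ∑ r ∈ F, (r ^ n.factorization r).factorization :=
      Nat.factorization_prod fun r hr => (Nat.pow_pos (hFprime r hr).pos).ne'
    rw [h1, Finsupp.finset_sum_apply]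
    rw [Finset.sum_congr rfl fun r hr => by
      rw [(hFprime r hr).factorization_pow, Finsupp.single_apply]]
    exact Finset.sum_ite_eq' F s _
  have hmdvd : m ∣ n := by
    have hn' : ∏ r ∈ n.primeFactors, r ^ n.factorization r = n := by
      conv_rhs => rw [← Nat.factorization_prod_pow_eq_self hn.ne']
      rfl
    rw [← hn']
    exact Finset.prod_dvd_prod_of_subset _ _ _ hFsub
  have hqm : ¬ q ∣ m := by
    intro hdvd
    have := hq.factorization_pos_of_dvd hm0.ne' hdvd
    rw [hfmval q] at this
    simp [F] at this
  refine ⟨hm0, hmdvd, hqm, fun d hdn hdm => ?_⟩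
  by_contra hcon
  push_neg at hcon
  apply hdm
  have hd0 : d ≠ 0 := by rintro rfl; rw [zero_dvd_iff] at hdn; omega
  rw [← Nat.factorization_le_iff_dvd hd0 hm0.ne']
  intro s
  rcases Nat.eq_zero_or_pos (d.factorization s) with h0 | hpos
  · simp [h0]
  · have hs : s ∈ d.primeFactors := by
      rw [← Nat.support_factorization]
      exact Finsupp.mem_support_iff.mpr hpos.ne'
    obtain ⟨hsprime, hsd, -⟩ := Nat.mem_primeFactors.mp hs
    have hsq : s < q := lt_of_not_ge fun hle => absurd (hcon s hsprime hsd) (by omega)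
    have hsF : s ∈ F := Finset.mem_filter.mpr
      ⟨Nat.mem_primeFactors.mpr ⟨hsprime, hsd.trans hdn, hn.ne'⟩, hsq⟩
    have hle : d.factorization ≤ n.factorization := (Nat.factorization_le_iff_dvd hd0 hn.ne').mpr hdn
    calc d.factorization s ≤ n.factorization s := hle s
      _ = m.factorization s := by rw [hfmval s, if_pos hsF]

theorem lambda_wpp {n : ℕ} (hn : 0 < n) (hlam : LambdaPractical n) : WeaklyPhiPractical n := by
  refine ⟨hn, fun q hq hqdvd => ?_⟩
  by_contra hlt
  push_neg at hlt
  set m := ∏ r ∈ n.primeFactors.filter (· < q), r ^ n.factorization r with hmdef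
  obtain ⟨hm0, hmdvd, hqm, hkey⟩ := m_facts hn hq
  rw [← hmdef] at hm0 hmdvd hqm hkey
  have hmlt : m < n := lt_of_le_of_ne (Nat.le_of_dvd hn hmdvd)
    (fun h => hqm (by rw [h]; exact hqdvd))
  -- choose the prime p
  set T := n.primeFactors.filter (q ≤ ·) with hTdef
  obtain ⟨p, hp, hpn, hpord⟩ := exists_simultaneous_primroot T
    (fun s hs => Nat.prime_of_mem_primeFactors (Finset.mem_filter.mp hs).1) n
  haveI := Fact.mk hp
  have hpndvd : ¬ p ∣ n := fun h => absurd (Nat.le_of_dvd hn h) (by omega)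
  -- get the divisor of degree m + 1
  obtain ⟨g, hgdvd, hgdeg⟩ := hlam p hp (m + 1) (by omega) (by omega)
  have hXn0 : (X ^ n - 1 : (ZMod p)[X]) ≠ 0 := by
    have : (X ^ n - C 1 : (ZMod p)[X]).Monic := monic_X_pow_sub_C 1 hn.ne'
    simpa using this.ne_zero
  have hg0 : g ≠ 0 := fun h => hXn0 (by simpa [h] using hgdvd)
  have hsqf : Squarefree (X ^ n - 1 : (ZMod p)[X]) := by
    have hcast : ((n : ZMod p)) ≠ 0 := by
      rw [Ne, ZMod.natCast_eq_zero_iff]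
      exact hpndvd
    have : (X ^ n - C 1 : (ZMod p)[X]).Separable := separable_X_pow_sub_C 1 hcast one_ne_zero
    simpa using this.squarefree
  have hXm0 : (X ^ m - 1 : (ZMod p)[X]) ≠ 0 := by
    have : (X ^ m - C 1 : (ZMod p)[X]).Monic := monic_X_pow_sub_C 1 hm0.ne'
    simpa using this.ne_zero
  -- split off gcd with X^m - 1
  set G := EuclideanDomain.gcd g (X ^ m - 1 : (ZMod p)[X]) with hGdef
  have hGg : G ∣ g := EuclideanDomain.gcd_dvd_left _ _
  have hGm : G ∣ X ^ m - 1 := EuclideanDomain.gcd_dvd_right _ _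
  have hG0 : G ≠ 0 := fun h => hg0 ((EuclideanDomain.gcd_eq_zero_iff.mp h).1)
  set B := g / G with hBdef
  have hGB : G * B = g := EuclideanDomain.mul_div_cancel' hG0 hGg
  have hB0 : B ≠ 0 := fun h => hg0 (by rw [← hGB, h, mul_zero])
  have hdeg : G.natDegree + B.natDegree = m + 1 := by
    rw [← natDegree_mul hG0 hB0, hGB, hgdeg]
  have hGdegle : G.natDegree ≤ m := by
    have := natDegree_le_of_dvd hGm hXm0
    have hXm : (X ^ m - 1 : (ZMod p)[X]).natDegree = m := by
      have : (X ^ m - C (1 : ZMod p)).natDegree = m := natDegree_X_pow_sub_C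
      simpa using this
    omega
  have hBunit : ¬ IsUnit B := fun h => by
    have := natDegree_eq_zero_of_isUnit h
    omega
  obtain ⟨h, hmonic, hirr, hhB⟩ := Polynomial.exists_monic_irreducible_factor B hBunit
  have hBg : B ∣ g := ⟨G, by rw [← hGB]; ring⟩
  have hhg : h ∣ g := hhB.trans hBg
  have hhn : h ∣ X ^ n - 1 := hhg.trans hgdvd
  have hhm : ¬ h ∣ X ^ m - 1 := by
    intro hcon
    have hhG : h ∣ G := EuclideanDomain.dvd_gcd hhg hcon
    have : h * h ∣ X ^ n - 1 := (hGB ▸ (mul_dvd_mul hhG hhB)).trans hgdvd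
    exact hirr.not_isUnit (hsqf h this)
  -- the degree of h is both ≤ m + 1 and ≥ q - 1
  obtain ⟨d, hd0, hdn, hdcard, hdprop⟩ := order_dvd_of_irred_factor hp hn hirr hmonic hhn
  have hdm : ¬ d ∣ m := fun hd => hhm (hdprop m hd)
  obtain ⟨s, hsprime, hsd, hsq⟩ := hkey d hdn hdm
  have hsT : s ∈ T := Finset.mem_filter.mpr
    ⟨Nat.mem_primeFactors.mpr ⟨hsprime, hsd.trans hdn, hn.ne'⟩, hsq⟩
  have hk1 : 1 ≤ h.natDegree := hirr.natDegree_pos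
  have hscard : s ∣ p ^ h.natDegree - 1 := hsd.trans hdcard
  have hpk1 : 1 ≤ p ^ h.natDegree := Nat.one_le_pow _ _ hp.pos
  have hmod : (1 : ℕ) ≡ p ^ h.natDegree [MOD s] := (Nat.modEq_iff_dvd' hpk1).mpr hscard
  have hcast : ((p : ZMod s)) ^ h.natDegree = 1 := by
    have := (ZMod.natCast_eq_natCast_iff _ _ _).mpr hmod
    push_cast at this
    exact this.symm
  have hord : orderOf ((p : ZMod s)) ∣ h.natDegree := orderOf_dvd_of_pow_eq_one hcast
  rw [hpord s hsT] at hord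
  have hs1 : s - 1 ≤ h.natDegree := Nat.le_of_dvd (by omega) hord
  have hkle : h.natDegree ≤ m + 1 := by
    have := natDegree_le_of_dvd hhg hg0
    omega
  have := hsprime.two_le
  omega


theorem stmt11 (n : ℕ) (hn : 0 < n) (heven : 2 ∣ n) :
    (WeaklyPhiPractical n ↔ PhiPractical n) ∧
    (PhiPractical n ↔ LambdaPractical n) := by
  have A : WeaklyPhiPractical n → PhiPractical n := fun h =>
    good_phiPractical hn (wpp_good n hn (Or.inr ⟨heven, h⟩))
  have B : PhiPractical n → LambdaPractical n := phi_imp_lambda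
  have C : LambdaPractical n → WeaklyPhiPractical n := lambda_wpp hn
  exact ⟨⟨A, fun h => C (B h)⟩, ⟨B, fun h => A (C h)⟩⟩
end

section
/- Let n be a squarefree positive integer. Then n is λ-practical if and only if n is φ-practical. -/
open scoped Classical

open Polynomial Finset


/-- Combinatorial core: for squarefree `n` satisfying the weak condition,
every `m ≤ n` is a subset sum of totients of divisors. -/
lemma sum_totient_cover : ∀ n : ℕ, 0 < n → Squarefree n →
    (∀ q : ℕ, q.Prime → q ∣ n → q ≤ (∏ r ∈ n.primeFactors.filter (· < q), r) + 2) →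
    ∀ m : ℕ, m ≤ n → ∃ S ⊆ n.divisors, ∑ d ∈ S, d.totient = m := by
  intro n
  induction n using Nat.strong_induction_on with
  | _ n IH =>
    intro hn hsf hw m hm
    rcases Nat.lt_or_ge m 2 with hm2 | hm2
    · interval_cases m
      · exact ⟨∅, Finset.empty_subset _, rfl⟩
      · exact ⟨{1}, by simp [Finset.singleton_subset_iff, Nat.one_mem_divisors, hn.ne'], by simp⟩
    · have h2 : 2 ≤ n := le_trans hm2 hm
      have hne : n.primeFactors.Nonempty := (Nat.nonempty_primeFactors).mpr h2
      set q := n.primeFactors.max' hne with hq_def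
      have hqmem : q ∈ n.primeFactors := Finset.max'_mem _ hne
      have hqp : q.Prime := Nat.prime_of_mem_primeFactors hqmem
      have hqn : q ∣ n := Nat.dvd_of_mem_primeFactors hqmem
      have hmax : ∀ r ∈ n.primeFactors, r ≤ q := fun r hr => Finset.le_max' _ r hr
      set N := n / q with hN_def
      have hNq : N * q = n := Nat.div_mul_cancel hqn
      have hN0 : 0 < N := Nat.div_pos (Nat.le_of_dvd hn hqn) hqp.pos
      have hNdvd : N ∣ n := ⟨q, hNq.symm⟩
      have hqN : ¬ q ∣ N := by
        intro hd
        have hqq : q * q ∣ n := by rw [← hNq]; exact mul_dvd_mul hd dvd_rfl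
        exact hqp.not_isUnit (hsf q hqq)
      have hNsf : Squarefree N := hsf.squarefree_of_dvd hNdvd
      have hNlt : N < n := Nat.div_lt_self hn hqp.one_lt
      have hprimesN : ∀ r : ℕ, r.Prime → r ∣ N → r < q := by
        intro r hr hrN
        have hrn : r ∣ n := hrN.trans hNdvd
        have hle : r ≤ q := hmax r (Nat.mem_primeFactors.mpr ⟨hr, hrn, hn.ne'⟩)
        rcases hle.lt_or_eq with h | h
        · exact h
        · exact absurd (h ▸ hrN) hqN
      have hpfN : n.primeFactors.filter (· < q) = N.primeFactors := by
        ext r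
        simp only [Finset.mem_filter, Nat.mem_primeFactors]
        constructor
        · rintro ⟨⟨hr, hrn, -⟩, hrq⟩
          have hrn' : r ∣ N * q := by rw [hNq]; exact hrn
          rcases (Nat.Prime.dvd_mul hr).mp hrn' with h | h
          · exact ⟨hr, h, hN0.ne'⟩
          · have : r = q := (Nat.prime_dvd_prime_iff_eq hr hqp).mp h
            omega
        · rintro ⟨hr, hrN, -⟩
          exact ⟨⟨hr, hrN.trans hNdvd, hn.ne'⟩, hprimesN r hr hrN⟩
      have hqle : q ≤ N + 2 := by
        have := hw q hqp hqn
        rwa [hpfN, Nat.prod_primeFactors_of_squarefree hNsf] at this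
      have hwN : ∀ q' : ℕ, q'.Prime → q' ∣ N →
          q' ≤ (∏ r ∈ N.primeFactors.filter (· < q'), r) + 2 := by
        intro q' hq' hq'N
        have hq'q : q' < q := hprimesN q' hq' hq'N
        have heq : n.primeFactors.filter (· < q') = N.primeFactors.filter (· < q') := by
          ext r
          simp only [Finset.mem_filter, Nat.mem_primeFactors]
          constructor
          · rintro ⟨⟨hr, hrn, -⟩, hrq⟩
            have hrn' : r ∣ N * q := by rw [hNq]; exact hrn
            rcases (Nat.Prime.dvd_mul hr).mp hrn' with h | h
            · exact ⟨⟨hr, h, hN0.ne'⟩, hrq⟩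
            · have : r = q := (Nat.prime_dvd_prime_iff_eq hr hqp).mp h
              omega
          · rintro ⟨⟨hr, hrN, -⟩, hrq⟩
            exact ⟨⟨hr, hrN.trans hNdvd, hn.ne'⟩, hrq⟩
        have := hw q' hq' (hq'N.trans hNdvd)
        rwa [heq] at this
      -- choose t and s
      obtain ⟨t, s, htN, hsN, hsum⟩ : ∃ t s : ℕ, t ≤ N ∧ s ≤ N ∧ s + t * (q - 1) = m := by
        have hQ0 : 0 < q - 1 := by have := hqp.two_le; omega
        rcases le_or_gt (m / (q - 1)) N with h | h
        · refine ⟨m / (q - 1), m % (q - 1), h, ?_, ?_⟩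
          · have hlt := Nat.mod_lt m hQ0
            have := hqp.two_le
            omega
          · exact Nat.mod_add_div' m (q - 1)
        · refine ⟨N, m - N * (q - 1), le_rfl, ?_, ?_⟩
          · have h1 : m ≤ N * (q - 1) + N := by
              have h2 : N * q = N * (q - 1) + N := by
                have hq1 : q = (q - 1) + 1 := by have := hqp.two_le; omega
                calc N * q = N * ((q - 1) + 1) := by rw [← hq1]
                _ = N * (q - 1) + N := by ring
              have : m ≤ N * q := by rw [hNq]; exact hm
              omega
            omega
          · have h3 : N * (q - 1) ≤ m / (q - 1) * (q - 1) := Nat.mul_le_mul_right _ h.le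
            have h4 := Nat.div_mul_le_self m (q - 1)
            omega
      obtain ⟨S, hS, hSsum⟩ := IH N hNlt hN0 hNsf hwN s hsN
      obtain ⟨T, hT, hTsum⟩ := IH N hNlt hN0 hNsf hwN t htN
      refine ⟨S ∪ T.image (· * q), ?_, ?_⟩
      · intro d hd
        rcases Finset.mem_union.mp hd with h | h
        · have := Nat.mem_divisors.mp (hS h)
          exact Nat.mem_divisors.mpr ⟨this.1.trans hNdvd, hn.ne'⟩
        · obtain ⟨e, heT, rfl⟩ := Finset.mem_image.mp h
          have he := Nat.mem_divisors.mp (hT heT)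
          exact Nat.mem_divisors.mpr ⟨by rw [← hNq]; exact mul_dvd_mul he.1 dvd_rfl, hn.ne'⟩
      · have hdisj : Disjoint S (T.image (· * q)) := by
          rw [Finset.disjoint_left]
          intro d hdS hdI
          obtain ⟨e, heT, hde⟩ := Finset.mem_image.mp hdI
          have hdN : d ∣ N := (Nat.mem_divisors.mp (hS hdS)).1
          exact hqN (dvd_trans (by rw [← hde]; exact dvd_mul_left q e) hdN)
        rw [Finset.sum_union hdisj, hSsum]
        have hinj : Set.InjOn (· * q) T := fun a _ b _ hab =>
          Nat.eq_of_mul_eq_mul_right hqp.pos hab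
        rw [Finset.sum_image hinj]
        have hNcoq : N.Coprime q := (Nat.Coprime.symm ((Nat.Prime.coprime_iff_not_dvd hqp).mpr hqN))
        have htot : ∀ e ∈ T, (e * q).totient = e.totient * (q - 1) := by
          intro e heT
          have heN : e ∣ N := (Nat.mem_divisors.mp (hT heT)).1
          have hco : e.Coprime q := Nat.Coprime.coprime_dvd_left heN hNcoq
          rw [Nat.totient_mul hco, Nat.totient_prime hqp]
        rw [Finset.sum_congr rfl htot, ← Finset.sum_mul, hTsum]
        exact hsum

lemma weak_to_phi (n : ℕ) (hn : 0 < n) (hsf : Squarefree n)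
    (hw : ∀ q : ℕ, q.Prime → q ∣ n → q ≤ (∏ r ∈ n.primeFactors.filter (· < q), r) + 2) :
    PhiPractical n := by
  intro m hm1 hmn
  obtain ⟨S, hS, hsum⟩ := sum_totient_cover n hn hsf hw m hmn
  refine ⟨∏ d ∈ S, Polynomial.cyclotomic d ℤ, ?_, ?_⟩
  · rw [← Polynomial.prod_cyclotomic_eq_X_pow_sub_one hn ℤ]
    exact Finset.prod_dvd_prod_of_subset S n.divisors _ hS
  · rw [Polynomial.natDegree_prod _ _ (fun d _ => Polynomial.cyclotomic_ne_zero d ℤ)]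
    simpa [Polynomial.natDegree_cyclotomic] using hsum

lemma phi_to_ppractical {n : ℕ} (hn : 0 < n) (h : PhiPractical n) (p : ℕ) (hp : p.Prime) :
    PPractical p n := by
  haveI := Fact.mk hp
  intro m hm1 hmn
  obtain ⟨g, hgdvd, hgdeg⟩ := h m hm1 hmn
  obtain ⟨k, hk⟩ := hgdvd
  have hmonic : (Polynomial.X ^ n - 1 : Polynomial ℤ).Monic := by
    simpa using Polynomial.monic_X_pow_sub_C (1 : ℤ) hn.ne'
  have hlc : g.leadingCoeff * k.leadingCoeff = 1 := by
    have h1 := hmonic.leadingCoeff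
    rw [hk, Polynomial.leadingCoeff_mul] at h1
    exact h1
  have hunit : IsUnit g.leadingCoeff := IsUnit.of_mul_eq_one _ hlc
  have hne : (Int.castRingHom (ZMod p)) g.leadingCoeff ≠ 0 := by
    rcases Int.isUnit_iff.mp hunit with h1 | h1 <;> rw [h1] <;> simp
  refine ⟨g.map (Int.castRingHom (ZMod p)), ?_, ?_⟩
  · have := Polynomial.map_dvd (Int.castRingHom (ZMod p)) ⟨k, hk⟩
    simpa using this
  · rw [Polynomial.natDegree_map_of_leadingCoeff_ne_zero _ hne]
    exact hgdeg

lemma crt_exists : ∀ n : ℕ, Squarefree n → ∀ c : (r : ℕ) → ZMod r,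
    ∃ b : ℕ, ∀ r ∈ n.primeFactors, (b : ZMod r) = c r := by
  intro n
  induction n using Nat.strong_induction_on with
  | _ n IH =>
    intro hsf c
    rcases eq_or_ne n 1 with rfl | hn1
    · exact ⟨0, by simp⟩
    have hn0 : n ≠ 0 := by rintro rfl; exact not_squarefree_zero hsf
    set q := n.minFac with hq
    have hqp : q.Prime := Nat.minFac_prime hn1
    have hqn : q ∣ n := Nat.minFac_dvd n
    set N := n / q with hN
    have hNq : q * N = n := Nat.mul_div_cancel' hqn
    have hN0 : N ≠ 0 := by
      intro h; rw [h, mul_zero] at hNq; exact hn0 hNq.symm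
    have hqN : ¬ q ∣ N := by
      intro hd
      have : q * q ∣ n := by rw [← hNq]; exact mul_dvd_mul_left q hd
      exact hqp.not_isUnit (hsf q this)
    have hco : q.Coprime N := (Nat.Prime.coprime_iff_not_dvd hqp).mpr hqN
    have hNsf : Squarefree N := hsf.squarefree_of_dvd ⟨q, by rw [mul_comm]; exact hNq.symm⟩
    have hNlt : N < n := Nat.div_lt_self (Nat.pos_of_ne_zero hn0) hqp.one_lt
    obtain ⟨b', hb'⟩ := IH N hNlt hNsf c
    obtain ⟨k, hk1, hk2⟩ := Nat.chineseRemainder hco (c q).val b'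
    refine ⟨k, ?_⟩
    intro r hr
    have hrpf : n.primeFactors = {q} ∪ N.primeFactors := by
      rw [← hNq, Nat.primeFactors_mul hqp.pos.ne' hN0, Nat.Prime.primeFactors hqp]
    rcases Finset.mem_union.mp (hrpf ▸ hr) with h | h
    · have hrq : r = q := Finset.mem_singleton.mp h
      haveI : NeZero q := ⟨hqp.pos.ne'⟩
      have h2 : (k : ZMod q) = ((c q).val : ZMod q) := (ZMod.natCast_eq_natCast_iff _ _ _).mpr hk1
      rw [hrq, h2, ZMod.natCast_val, ZMod.cast_id]
    · have hrN : r ∣ N := Nat.dvd_of_mem_primeFactors h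
      have h3 : k ≡ b' [MOD r] := hk2.of_dvd hrN
      rw [(ZMod.natCast_eq_natCast_iff _ _ _).mpr h3, hb' r h]


lemma irred_factor {p : ℕ} [Fact p.Prime] {n M : ℕ} (hn : 0 < n) (hsf : Squarefree n)
    (hord : ∀ r : ℕ, r.Prime → r ∣ n → ¬ r ∣ M → orderOf ((p : ZMod r)) = r - 1)
    (h : Polynomial (ZMod p)) (hirr : Irreducible h) (hdvd : h ∣ Polynomial.X ^ n - 1) :
    h ∣ Polynomial.X ^ M - 1 ∨
      ∃ r : ℕ, r.Prime ∧ r ∣ n ∧ ¬ r ∣ M ∧ r - 1 ≤ h.natDegree := by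
  haveI : Fact (Irreducible h) := ⟨hirr⟩
  have h0 : h ≠ 0 := hirr.ne_zero
  set K := AdjoinRoot h with hK
  set α : K := AdjoinRoot.root h with hα
  have hαn : α ^ n = 1 := by
    have hz : AdjoinRoot.mk h (Polynomial.X ^ n - 1) = 0 := AdjoinRoot.mk_eq_zero.mpr hdvd
    have : α ^ n - 1 = 0 := by
      simpa [map_sub, map_pow, map_one, AdjoinRoot.mk_X] using hz
    exact sub_eq_zero.mp this
  set d := orderOf α with hd_def
  have hdn : d ∣ n := orderOf_dvd_of_pow_eq_one hαn
  by_cases hdM : d ∣ M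
  · left
    have hαM : α ^ M = 1 := orderOf_dvd_iff_pow_eq_one.mp hdM
    have haev : (Polynomial.aeval α) (Polynomial.X ^ M - 1 : Polynomial (ZMod p)) = 0 := by
      simp [hαM]
    have hmp : minpoly (ZMod p) α ∣ (Polynomial.X ^ M - 1 : Polynomial (ZMod p)) :=
      minpoly.dvd _ _ haev
    have hmin : minpoly (ZMod p) α = h * Polynomial.C h.leadingCoeff⁻¹ :=
      AdjoinRoot.minpoly_root h0
    obtain ⟨k, hk⟩ := hmp
    exact ⟨Polynomial.C h.leadingCoeff⁻¹ * k, by rw [hk, hmin, mul_assoc]⟩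
  · right
    -- find a prime r ∣ d with r ∤ M
    have hd0 : d ≠ 0 := by
      intro hzero
      rw [hzero] at hdn
      exact hn.ne' (Nat.eq_zero_of_zero_dvd hdn)
    have hdsf : Squarefree d := hsf.squarefree_of_dvd hdn
    obtain ⟨r, hrp, hrd, hrM⟩ : ∃ r : ℕ, r.Prime ∧ r ∣ d ∧ ¬ r ∣ M := by
      by_contra hcon
      push_neg at hcon
      apply hdM
      have hall : ∀ r ∈ d.primeFactors, r ∣ M := fun r hr =>
        hcon r (Nat.prime_of_mem_primeFactors hr) (Nat.dvd_of_mem_primeFactors hr)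
      have : ∏ r ∈ d.primeFactors, r ∣ M :=
        Finset.prod_primes_dvd M
          (fun r hr => (Nat.prime_of_mem_primeFactors hr).prime) hall
      rwa [Nat.prod_primeFactors_of_squarefree hdsf] at this
    have hrn : r ∣ n := hrd.trans hdn
    refine ⟨r, hrp, hrn, hrM, ?_⟩
    -- finite field K of cardinality p ^ deg h
    letI pb := AdjoinRoot.powerBasis h0
    haveI : Fintype K := Module.fintypeOfFintype pb.basis
    have hcard : Fintype.card K = p ^ h.natDegree := by
      rw [Module.card_eq_pow_finrank (K := ZMod p) (V := K), ZMod.card, pb.finrank]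
      rfl
    have hα0 : α ≠ 0 := by
      intro hzero
      rw [hzero, zero_pow hn.ne'] at hαn
      exact zero_ne_one hαn
    have hpow : α ^ (Fintype.card K - 1) = 1 := FiniteField.pow_card_sub_one_eq_one α hα0
    have hdcard : d ∣ Fintype.card K - 1 := orderOf_dvd_of_pow_eq_one hpow
    have hrcard : r ∣ p ^ h.natDegree - 1 := by
      rw [← hcard]; exact hrd.trans hdcard
    haveI : Fact r.Prime := ⟨hrp⟩
    have hp1 : 1 ≤ p ^ h.natDegree := Nat.one_le_pow _ _ (Fact.out (p := p.Prime)).pos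
    have hcast : ((p : ZMod r)) ^ h.natDegree = 1 := by
      have hz : ((p ^ h.natDegree - 1 : ℕ) : ZMod r) = 0 :=
        (ZMod.natCast_eq_zero_iff _ _).mpr hrcard
      have : ((p ^ h.natDegree : ℕ) : ZMod r) = 1 := by
        rw [← Nat.sub_add_cancel hp1, Nat.cast_add, hz, Nat.cast_one, zero_add]
      rwa [Nat.cast_pow] at this
    have hdvdD : r - 1 ∣ h.natDegree := by
      rw [← hord r hrp hrn hrM]
      exact orderOf_dvd_of_pow_eq_one hcast
    exact Nat.le_of_dvd hirr.natDegree_pos hdvdD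

lemma lambda_to_weak (n : ℕ) (hn : 0 < n) (hsf : Squarefree n) (hl : LambdaPractical n) :
    ∀ q : ℕ, q.Prime → q ∣ n → q ≤ (∏ r ∈ n.primeFactors.filter (· < q), r) + 2 := by
  intro q hqp hqn
  by_contra hcon
  push_neg at hcon
  set M := ∏ r ∈ n.primeFactors.filter (· < q), r with hM
  have exgen : ∀ r : ℕ, r.Prime → ∃ x : ZMod r, orderOf x = r - 1 := by
    intro r hr
    haveI : Fact r.Prime := ⟨hr⟩
    obtain ⟨ζ, hζ⟩ := IsCyclic.exists_generator (α := (ZMod r)ˣ)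
    refine ⟨(ζ : ZMod r), ?_⟩
    rw [orderOf_units, orderOf_eq_card_of_forall_mem_zpowers hζ, Nat.card_eq_fintype_card, ZMod.card_units]
  let c : (r : ℕ) → ZMod r := fun r =>
    if hr : r.Prime ∧ ¬ r < q then (exgen r hr.1).choose else 1
  have hcbig : ∀ r : ℕ, r.Prime → ¬ r < q → orderOf (c r) = r - 1 := by
    intro r hr hrq
    simp only [c, dif_pos (⟨hr, hrq⟩ : r.Prime ∧ ¬ r < q)]
    exact (exgen r hr).choose_spec
  have hcne : ∀ r : ℕ, r.Prime → c r ≠ 0 := by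
    intro r hr hzero
    haveI : Fact r.Prime := ⟨hr⟩
    by_cases hrq : r < q
    · have hc1 : c r = 1 := dif_neg (by tauto)
      rw [hc1] at hzero
      exact one_ne_zero hzero
    · have h1 := hcbig r hr hrq
      rw [hzero] at h1
      have h3 := pow_orderOf_eq_one (0 : ZMod r)
      rw [h1, zero_pow (by have := hr.two_le; omega : r - 1 ≠ 0)] at h3
      exact zero_ne_one h3
  obtain ⟨b, hb⟩ := crt_exists n hsf c
  haveI : NeZero n := ⟨hn.ne'⟩
  have hunit : IsUnit ((b : ZMod n)) := by
    rw [ZMod.isUnit_iff_coprime]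
    by_contra hcop
    obtain ⟨r, hrp, hrb, hrn⟩ := Nat.Prime.not_coprime_iff_dvd.mp hcop
    haveI : NeZero r := ⟨hrp.pos.ne'⟩
    have hmem : r ∈ n.primeFactors := Nat.mem_primeFactors.mpr ⟨hrp, hrn, hn.ne'⟩
    have h1 : (b : ZMod r) = 0 := (ZMod.natCast_eq_zero_iff _ _).mpr hrb
    rw [hb r hmem] at h1
    exact hcne r hrp h1
  obtain ⟨p, -, hpp, hpmod⟩ := Nat.forall_exists_prime_gt_and_eq_mod hunit 0
  haveI : Fact p.Prime := ⟨hpp⟩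
  have hpr : ∀ r ∈ n.primeFactors, (p : ZMod r) = c r := by
    intro r hr
    have hrn : r ∣ n := Nat.dvd_of_mem_primeFactors hr
    have h1 := congrArg (ZMod.castHom hrn (ZMod r)) hpmod
    rw [map_natCast, map_natCast] at h1
    rw [h1, hb r hr]
  have hordbig : ∀ r : ℕ, r.Prime → r ∣ n → ¬ r ∣ M → orderOf ((p : ZMod r)) = r - 1 := by
    intro r hr hrn hrM
    have hmem : r ∈ n.primeFactors := Nat.mem_primeFactors.mpr ⟨hr, hrn, hn.ne'⟩
    have hrq : ¬ r < q := by
      intro hlt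
      exact hrM (Finset.dvd_prod_of_mem _ (Finset.mem_filter.mpr ⟨hmem, hlt⟩))
    rw [hpr r hmem]
    exact hcbig r hr hrq
  have hpn : ¬ p ∣ n := by
    intro hdvd
    have hmem : p ∈ n.primeFactors := Nat.mem_primeFactors.mpr ⟨hpp, hdvd, hn.ne'⟩
    have h1 := hpr p hmem
    rw [ZMod.natCast_self] at h1
    exact hcne p hpp h1.symm
  have hM1 : 1 ≤ M :=
    Finset.prod_pos fun r hr => (Nat.prime_of_mem_primeFactors (Finset.mem_filter.mp hr).1).pos
  have hMdvd : M ∣ n := by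
    have h1 : M ∣ ∏ r ∈ n.primeFactors, r :=
      Finset.prod_dvd_prod_of_subset _ _ _ (Finset.filter_subset _ _)
    rwa [Nat.prod_primeFactors_of_squarefree hsf] at h1
  have hqM : ¬ q ∣ M := by
    intro hdvd
    have hco : q.Coprime M := Nat.Coprime.prod_right fun r hr =>
      (Nat.coprime_primes hqp (Nat.prime_of_mem_primeFactors (Finset.mem_filter.mp hr).1)).mpr
        (by have := (Finset.mem_filter.mp hr).2; omega)
    exact hqp.one_lt.ne' (Nat.Coprime.eq_one_of_dvd hco hdvd)
  have hMlt : M < n := lt_of_le_of_ne (Nat.le_of_dvd hn hMdvd) fun heq => hqM (heq ▸ hqn)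
  obtain ⟨g, hgdvd, hgdeg⟩ := hl p hpp (M + 1) (by omega) (by omega)
  have hfne : (Polynomial.X ^ n - 1 : Polynomial (ZMod p)) ≠ 0 := by
    have h1 : (Polynomial.X ^ n - 1 : Polynomial (ZMod p)).Monic := by
      simpa using Polynomial.monic_X_pow_sub_C (1 : ZMod p) hn.ne'
    exact h1.ne_zero
  have hsep : (Polynomial.X ^ n - 1 : Polynomial (ZMod p)).Separable := by
    have hcast : ((n : ℕ) : ZMod p) ≠ 0 := by
      rw [Ne, ZMod.natCast_eq_zero_iff]
      exact hpn
    simpa using Polynomial.separable_X_pow_sub_C (1 : ZMod p) hcast one_ne_zero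
  have hsq : Squarefree (Polynomial.X ^ n - 1 : Polynomial (ZMod p)) := hsep.squarefree
  have hg0 : g ≠ 0 := by rintro rfl; exact hfne (zero_dvd_iff.mp hgdvd)
  have hgsq : Squarefree g := hsq.squarefree_of_dvd hgdvd
  set fM := (Polynomial.X ^ M - 1 : Polynomial (ZMod p)) with hfM
  have hfMne : fM ≠ 0 := by
    have h1 : fM.Monic := by
      simpa [hfM] using Polynomial.monic_X_pow_sub_C (1 : ZMod p) (by omega : M ≠ 0)
    exact h1.ne_zero
  have hfMdeg : fM.natDegree = M := by
    simpa [hfM] using Polynomial.natDegree_X_pow_sub_C (n := M) (r := (1 : ZMod p))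
  set g1 := EuclideanDomain.gcd g fM with hg1
  have hg1g : g1 ∣ g := EuclideanDomain.gcd_dvd_left g fM
  have hg1M : g1 ∣ fM := EuclideanDomain.gcd_dvd_right g fM
  have hg1deg : g1.natDegree ≤ M := hfMdeg ▸ Polynomial.natDegree_le_of_dvd hg1M hfMne
  obtain ⟨g2, hsplit⟩ := hg1g
  have hg1ne : g1 ≠ 0 := by
    intro hz; rw [hz, zero_mul] at hsplit; exact hg0 hsplit
  have hg2ne : g2 ≠ 0 := by
    intro hz; rw [hz, mul_zero] at hsplit; exact hg0 hsplit
  have hdegs : g.natDegree = g1.natDegree + g2.natDegree := by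
    rw [hsplit, Polynomial.natDegree_mul hg1ne hg2ne]
  have hg2pos : 0 < g2.natDegree := by omega
  obtain ⟨h, hhirr, hhg2⟩ := WfDvdMonoid.exists_irreducible_factor
    (Polynomial.not_isUnit_of_natDegree_pos g2 hg2pos) hg2ne
  have hhg : h ∣ g := hhg2.trans ⟨g1, by rw [hsplit, mul_comm]⟩
  have hhn : h ∣ (Polynomial.X ^ n - 1 : Polynomial (ZMod p)) := hhg.trans hgdvd
  rcases irred_factor hn hsf hordbig h hhirr hhn with hcase | ⟨r, hrp, hrn2, hrM2, hrdeg⟩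
  · have hh1 : h ∣ g1 := EuclideanDomain.dvd_gcd hhg hcase
    have hhh : h * h ∣ g := by rw [hsplit]; exact mul_dvd_mul hh1 hhg2
    exact hhirr.not_isUnit (hgsq h hhh)
  · have h1 : h.natDegree ≤ g2.natDegree := Polynomial.natDegree_le_of_dvd hhg2 hg2ne
    have hrq : ¬ r < q := fun hlt => hrM2 (Finset.dvd_prod_of_mem _
      (Finset.mem_filter.mpr ⟨Nat.mem_primeFactors.mpr ⟨hrp, hrn2, hn.ne'⟩, hlt⟩))
    have := hrp.two_le
    omega


theorem stmt12 (n : ℕ) (hn : 0 < n) (hsf : Squarefree n) :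
    LambdaPractical n ↔ PhiPractical n := by
  constructor
  · intro hl
    exact weak_to_phi n hn hsf (lambda_to_weak n hn hsf hl)
  · intro hphi p hp
    exact phi_to_ppractical hn hphi p hp
end
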